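/- arXiv:1106.2987 — 4 statements merged into one kernel-verified Lean document; each statement's English description precedes it below -/
import Mathlib

section
/- Let T be a tree on n vertices that is not isomorphic to a path P_n. Then there exists a pendant vertex v of T such that for every vertex u of T with u ≠ v, the eccentricity of u in T equals the eccentricity of u in T − v, i.e. ε_T(u) = ε_{T−v}(u). -/
open SimpleGraph

/-- The eccentricity of a vertex: the maximum distance from it to any other vertex. -/
noncomputable def eccentricity {V : Type*} [Fintype V] (G : SimpleGraph V) (v : V) : ℕ :=
  Finset.univ.sup fun u => G.dist v u

section EccAux
set_option linter.unusedSectionVars false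
set_option linter.unusedVariables false

variable {V : Type*} [DecidableEq V] {T : SimpleGraph V}


lemma tree_path_length_eq_dist (hT : T.IsTree) {u v : V} (p : T.Walk u v) (hp : p.IsPath) :
    p.length = T.dist u v := by
  obtain ⟨q, hq, hlen⟩ := hT.isConnected.exists_path_of_dist u v
  have : (⟨p, hp⟩ : T.Path u v) = ⟨q, hq⟩ := hT.IsAcyclic.path_unique _ _
  rw [← hlen]
  exact congrArg Walk.length (congrArg Subtype.val this)

lemma tree_dist_add_of_mem_support (hT : T.IsTree) {u v : V} {p : T.Walk u v} (hp : p.IsPath)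
    {x : V} (hx : x ∈ p.support) :
    T.dist u x + T.dist x v = T.dist u v ∧ T.dist u x = (p.takeUntil x hx).length := by
  have h1 : (p.takeUntil x hx).length = T.dist u x :=
    tree_path_length_eq_dist hT _ (hp.takeUntil hx)
  have h2 : (p.dropUntil x hx).length = T.dist x v :=
    tree_path_length_eq_dist hT _ (hp.dropUntil hx)
  have h3 := Walk.take_spec p hx
  have h4 : p.length = T.dist u v := tree_path_length_eq_dist hT p hp
  constructor
  · rw [← h1, ← h2, ← h4]
    conv_rhs => rw [← h3]
    exact (Walk.length_append _ _).symm
  · exact h1.symm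

lemma isPath_append_of_inter {u v w : V} {p : T.Walk u v} {q : T.Walk v w}
    (hp : p.IsPath) (hq : q.IsPath) (h : ∀ x ∈ p.support, x ∈ q.support → x = v) :
    (p.append q).IsPath := by
  rw [Walk.isPath_def, Walk.support_append]
  refine List.Nodup.append hp.support_nodup (hq.support_nodup.sublist (List.tail_sublist _)) ?_
  intro x hxp hxq
  have hxq' : x ∈ q.support := List.mem_of_mem_tail hxq
  have hxv : x = v := h x hxp hxq'
  subst hxv
  have := hq.support_nodup
  rw [q.support_eq_cons] at this
  exact (List.nodup_cons.mp this).1 hxq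

lemma exists_first_split (S : Set V) [DecidablePred (· ∈ S)] :
    ∀ {u a : V} (p : T.Walk u a), a ∈ S →
    ∃ (m : V) (q : T.Walk u m) (r : T.Walk m a), m ∈ S ∧ p = q.append r ∧
      (∀ x ∈ q.support, x ∈ S → x = m) := by
  intro u a p
  induction p with
  | @nil u =>
    intro ha
    exact ⟨u, Walk.nil, Walk.nil, ha, rfl, by simp⟩
  | @cons u y z h q' ih =>
    intro ha
    by_cases hu : u ∈ S
    · exact ⟨u, Walk.nil, Walk.cons h q', hu, rfl, by simp⟩

    · obtain ⟨m, q1, r1, hm, heq, hfirst⟩ := ih ha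
      refine ⟨m, Walk.cons h q1, r1, hm, by rw [heq]; rfl, ?_⟩
      intro x hx hxS
      rw [Walk.support_cons] at hx
      rcases List.mem_cons.mp hx with rfl | hx
      · exact absurd hxS hu
      · exact hfirst x hx hxS

lemma tree_median (hT : T.IsTree) {a b : V} (pab : T.Walk a b) (hpab : pab.IsPath) (u : V) :
    ∃ m, m ∈ pab.support ∧
      T.dist u a = T.dist u m + T.dist m a ∧
      T.dist u b = T.dist u m + T.dist m b := by
  classical
  obtain ⟨p, hp, hplen⟩ := hT.isConnected.exists_path_of_dist u a
  obtain ⟨m, q, r, hm, heq, hfirst⟩ :=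
    exists_first_split {x | x ∈ pab.support} p (by simp)
  have hq : q.IsPath := by rw [heq] at hp; exact hp.of_append_left
  have hr : r.IsPath := by rw [heq] at hp; exact hp.of_append_right
  have hqlen : q.length = T.dist u m := tree_path_length_eq_dist hT q hq
  have hrlen : r.length = T.dist m a := tree_path_length_eq_dist hT r hr
  refine ⟨m, hm, ?_, ?_⟩
  · rw [← hplen, heq, Walk.length_append, hqlen, hrlen]
  · set s := pab.dropUntil m hm with hs
    have hsp : s.IsPath := hpab.dropUntil hm
    have hslen : s.length = T.dist m b := tree_path_length_eq_dist hT s hsp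
    have hqs : (q.append s).IsPath := by
      refine isPath_append_of_inter hq hsp ?_
      intro x hxq hxs
      exact hfirst x hxq (pab.support_dropUntil_subset hm hxs)
    have := tree_path_length_eq_dist hT _ hqs
    rw [Walk.length_append, hqlen, hslen] at this
    exact this.symm

lemma tree_colinear (hT : T.IsTree) {a b : V} {pab : T.Walk a b} (hpab : pab.IsPath)
    {m m' : V} (hm : m ∈ pab.support) (hm' : m' ∈ pab.support) :
    T.dist a m + T.dist m m' = T.dist a m' ∨
    T.dist a m' + T.dist m' m = T.dist a m := by
  have hsplit := Walk.take_spec pab hm'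
  have : m ∈ ((pab.takeUntil m' hm').append (pab.dropUntil m' hm')).support := by
    rw [hsplit]; exact hm
  rw [Walk.mem_support_append_iff] at this
  rcases this with h | h
  · left
    exact (tree_dist_add_of_mem_support hT (hpab.takeUntil hm') h).1
  · right
    have := (tree_dist_add_of_mem_support hT (hpab.dropUntil hm') h).1
    -- this : dist m' m + dist m b = dist m' b
    have h2 := (tree_dist_add_of_mem_support hT hpab hm).1
    have h3 := (tree_dist_add_of_mem_support hT hpab hm').1
    have c1 : T.dist a m' = T.dist m' a := SimpleGraph.dist_comm
    have c2 : T.dist a m = T.dist m a := SimpleGraph.dist_comm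
    omega

lemma tree_dist_le_max (hT : T.IsTree) {a b : V}
    (hdiam : ∀ x y : V, T.dist x y ≤ T.dist a b) (u w : V) :
    T.dist u w ≤ max (T.dist u a) (T.dist u b) := by
  classical
  obtain ⟨pab, hpab, hpablen⟩ := hT.isConnected.exists_path_of_dist a b
  obtain ⟨m, hm, e1, e2⟩ := tree_median hT pab hpab u
  obtain ⟨m', hm', f1, f2⟩ := tree_median hT pab hpab w
  have e3 := (tree_dist_add_of_mem_support hT hpab hm).1
  have f3 := (tree_dist_add_of_mem_support hT hpab hm').1
  have t1 : T.dist u w ≤ T.dist u m + T.dist m w := hT.isConnected.dist_triangle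
  have t2 : T.dist m w ≤ T.dist m m' + T.dist m' w := hT.isConnected.dist_triangle
  have hwa := hdiam w a
  have hwb := hdiam w b
  have cm : T.dist m a = T.dist a m := SimpleGraph.dist_comm
  have cm' : T.dist m' a = T.dist a m' := SimpleGraph.dist_comm
  have cw : T.dist m' w = T.dist w m' := SimpleGraph.dist_comm
  have cwa : T.dist w a = T.dist a w := SimpleGraph.dist_comm
  have cwb : T.dist w b = T.dist b w := SimpleGraph.dist_comm
  rcases tree_colinear hT hpab hm hm' with c | c
  · have cmm : T.dist m' m = T.dist m m' := SimpleGraph.dist_comm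
    -- dist u w ≤ dist u b
    have : T.dist u w ≤ T.dist u b := by omega
    omega
  · have cmm : T.dist m' m = T.dist m m' := SimpleGraph.dist_comm
    have : T.dist u w ≤ T.dist u a := by omega
    omega

lemma tree_dist_getVert (hT : T.IsTree) {x y : V} {p : T.Walk x y} (hp : p.IsPath) :
    ∀ i, i ≤ p.length → T.dist x (p.getVert i) = i := by
  induction p with
  | nil => intro i hi; simp only [Walk.length_nil, Nat.le_zero] at hi; subst hi; simp
  | @cons u w z h q ih =>
    intro i hi
    have hq : q.IsPath := hp.of_cons
    match i with
    | 0 => simp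
    | (i + 1) =>
      have hi' : i ≤ q.length := by simpa [Walk.length_cons] using hi
      have h1 : T.dist w (q.getVert i) = i := ih hq i hi'
      have hmemq : q.getVert i ∈ q.support :=
        Walk.mem_support_iff_exists_getVert.mpr ⟨i, rfl, hi'⟩
      have hmemp : q.getVert i ∈ (Walk.cons h q).support := by
        rw [Walk.support_cons]; exact List.mem_cons_of_mem _ hmemq
      have h2 := (tree_dist_add_of_mem_support hT hq hmemq).1
      have h3 := (tree_dist_add_of_mem_support hT hp hmemp).1
      have h4 : T.dist w z = q.length := (tree_path_length_eq_dist hT q hq).symm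
      have h5 : T.dist u z = q.length + 1 := by
        have := (tree_path_length_eq_dist hT _ hp).symm
        simpa [Walk.length_cons] using this
      have h6 : (Walk.cons h q).getVert (i + 1) = q.getVert i := rfl
      rw [h6]
      omega

lemma tree_dist_getVert₂ (hT : T.IsTree) {x y : V} {p : T.Walk x y} (hp : p.IsPath)
    {i j : ℕ} (hij : i ≤ j) (hj : j ≤ p.length) :
    T.dist (p.getVert i) (p.getVert j) = j - i := by
  have hi : T.dist x (p.getVert i) = i := tree_dist_getVert hT hp i (hij.trans hj)
  have hjd : T.dist x (p.getVert j) = j := tree_dist_getVert hT hp j hj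
  have hmi : p.getVert i ∈ p.support :=
    Walk.mem_support_iff_exists_getVert.mpr ⟨i, rfl, hij.trans hj⟩
  have hmj : p.getVert j ∈ p.support :=
    Walk.mem_support_iff_exists_getVert.mpr ⟨j, rfl, hj⟩
  have ccomm : T.dist (p.getVert j) (p.getVert i) = T.dist (p.getVert i) (p.getVert j) :=
    SimpleGraph.dist_comm
  rcases tree_colinear hT hp hmi hmj with c | c <;> omega

lemma tree_getVert_injOn (hT : T.IsTree) {x y : V} {p : T.Walk x y} (hp : p.IsPath)
    {i j : ℕ} (hi : i ≤ p.length) (hj : j ≤ p.length) (hij : p.getVert i = p.getVert j) :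
    i = j := by
  rcases le_total i j with h | h
  · have := tree_dist_getVert₂ hT hp h hj
    rw [hij, SimpleGraph.dist_self] at this
    omega
  · have := tree_dist_getVert₂ hT hp h hi
    rw [hij, SimpleGraph.dist_self] at this
    omega

/-- An internal vertex of a path has two distinct neighbors lying on the path support. -/
lemma internal_two_neighbors (hT : T.IsTree) {u v : V} {p : T.Walk u v} (hp : p.IsPath)
    {x : V} (hx : x ∈ p.support) (hxu : x ≠ u) (hxv : x ≠ v) :
    ∃ s t : V, s ≠ t ∧ T.Adj x s ∧ T.Adj x t ∧ s ∈ p.support ∧ t ∈ p.support := by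
  obtain ⟨i, rfl, hi⟩ := Walk.mem_support_iff_exists_getVert.mp hx
  have hi0 : i ≠ 0 := by
    intro h; subst h; exact hxu (Walk.getVert_zero p)
  have hilen : i ≠ p.length := by
    intro h; subst h; exact hxv (Walk.getVert_length p)
  have hilt : i < p.length := lt_of_le_of_ne hi hilen
  refine ⟨p.getVert (i - 1), p.getVert (i + 1), ?_, ?_, ?_, ?_, ?_⟩
  · intro h
    have := tree_getVert_injOn hT hp (by omega) (by omega) h
    omega
  · have := p.adj_getVert_succ (i := i - 1) (by omega)
    have h' : i - 1 + 1 = i := by omega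
    rw [h'] at this
    exact this.symm
  · exact p.adj_getVert_succ hilt
  · exact Walk.mem_support_iff_exists_getVert.mpr ⟨i - 1, rfl, by omega⟩
  · exact Walk.mem_support_iff_exists_getVert.mpr ⟨i + 1, rfl, by omega⟩

lemma diametral_unique_neighbor (hT : T.IsTree) {a b : V} (hab : a ≠ b)
    (hdiam : ∀ x y : V, T.dist x y ≤ T.dist a b) {x : V} (hx : T.Adj a x) :
    ∃ (q : T.Walk x b), (Walk.cons hx q).IsPath := by
  obtain ⟨q, hq, hqlen⟩ := hT.isConnected.exists_path_of_dist x b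
  have ha : a ∉ q.support := by
    intro ha
    have h1 := (tree_dist_add_of_mem_support hT hq ha).1
    have h2 := hdiam x b
    have h3 : T.dist x a = 0 := by omega
    have := (hT.isConnected.dist_eq_zero_iff (u := x) (v := a)).mp h3
    exact hx.ne' this
  exact ⟨q, hq.cons ha⟩

lemma diametral_degree_one [Fintype V] [DecidableRel T.Adj] (hT : T.IsTree) {a b : V}
    (hab : a ≠ b) (hdiam : ∀ x y : V, T.dist x y ≤ T.dist a b) :
    T.degree a = 1 := by
  obtain ⟨p₀, hp₀, hp₀len⟩ := hT.isConnected.exists_path_of_dist a b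
  have hpos : 0 < p₀.length := by
    rw [hp₀len]; exact hT.isConnected.pos_dist_of_ne hab
  have hadj : T.Adj a (p₀.getVert 1) := by
    have := p₀.adj_getVert_succ (i := 0) hpos
    simpa using this
  rw [← card_neighborFinset_eq_degree, Finset.card_eq_one]
  refine ⟨p₀.getVert 1, Finset.eq_singleton_iff_unique_mem.mpr ⟨?_, ?_⟩⟩
  · rwa [mem_neighborFinset]
  · intro y hy
    rw [mem_neighborFinset] at hy
    obtain ⟨q, hq⟩ := diametral_unique_neighbor hT hab hdiam hy
    have huniq := hT.existsUnique_path a b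
    obtain ⟨P, _, hPuniq⟩ := huniq
    have e1 : Walk.cons hy q = P := hPuniq _ hq
    have e2 : p₀ = P := hPuniq _ hp₀
    have : (Walk.cons hy q).getVert 1 = p₀.getVert 1 := by rw [e1, e2]
    simpa using this

lemma path_avoids_leaf [Fintype V] [DecidableRel T.Adj] (hT : T.IsTree) {v : V}
    (hv : T.degree v = 1) {u w : V} (hu : u ≠ v) (hw : w ≠ v)
    {p : T.Walk u w} (hp : p.IsPath) : v ∉ p.support := by
  intro hmem
  obtain ⟨s, t, hst, hadjs, hadjt, _, _⟩ :=
    internal_two_neighbors hT hp hmem (Ne.symm hu) (Ne.symm hw)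
  have hsub : ({s, t} : Finset V) ⊆ T.neighborFinset v := by
    intro z hz
    rw [Finset.mem_insert, Finset.mem_singleton] at hz
    rcases hz with rfl | rfl
    · rwa [mem_neighborFinset]
    · rwa [mem_neighborFinset]
  have hcard : ({s, t} : Finset V).card = 2 := Finset.card_pair hst
  have := Finset.card_le_card hsub
  rw [hcard, card_neighborFinset_eq_degree, hv] at this
  omega

lemma walk_lift {v : V} : ∀ {x y : V} (p : T.Walk x y), (∀ z ∈ p.support, z ≠ v) →
    ∀ (hx : x ≠ v) (hy : y ≠ v),
    ∃ q : (T.comap (Subtype.val : {a : V // a ≠ v} → V)).Walk ⟨x, hx⟩ ⟨y, hy⟩,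
      q.length = p.length := by
  intro x y p
  induction p with
  | nil => intro _ hx hy; exact ⟨Walk.nil, rfl⟩
  | @cons x₁ x₂ y h p' ih =>
    intro hall hx hy
    have hx₂ : x₂ ≠ v := hall x₂ (by simp)
    obtain ⟨q', hq'⟩ := ih (fun z hz => hall z (by simp [hz])) hx₂ hy
    exact ⟨Walk.cons (by exact h) q', by exact congrArg (· + 1) hq'⟩

lemma dist_comap_eq [Fintype V] [DecidableRel T.Adj] (hT : T.IsTree) {v : V}
    (hv : T.degree v = 1) (u w : {x : V // x ≠ v}) :
    (T.comap (Subtype.val : {x : V // x ≠ v} → V)).dist u w = T.dist u w := by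
  obtain ⟨p, hp, hplen⟩ := hT.isConnected.exists_path_of_dist u.val w.val
  have hall : ∀ z ∈ p.support, z ≠ v := by
    intro z hz hzv
    subst hzv
    exact path_avoids_leaf hT hv u.prop w.prop hp hz
  obtain ⟨q, hqlen⟩ := walk_lift p hall u.prop w.prop
  have hle : (T.comap (Subtype.val : {x : V // x ≠ v} → V)).dist u w ≤ T.dist u w := by
    have := SimpleGraph.dist_le q
    rwa [hqlen, hplen] at this
  have hreach : (T.comap (Subtype.val : {x : V // x ≠ v} → V)).Reachable u w := ⟨q⟩
  obtain ⟨r, hrlen⟩ := hreach.exists_walk_length_eq_dist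
  have hge : T.dist u.val w.val ≤ (T.comap (Subtype.val : {x : V // x ≠ v} → V)).dist u w := by
    have hmap := SimpleGraph.dist_le
      (r.map (SimpleGraph.Hom.comap (Subtype.val : {x : V // x ≠ v} → V) T))
    rwa [Walk.length_map, hrlen] at hmap
  omega

lemma ecc_transfer [Fintype V] [DecidableRel T.Adj] (hT : T.IsTree) {a b v : V}
    (hdiam : ∀ x y : V, T.dist x y ≤ T.dist a b) (hv : T.degree v = 1)
    (hva : a ≠ v) (hvb : b ≠ v) (u : {x : V // x ≠ v}) :
    eccentricity T (u : V) = eccentricity (T.comap (Subtype.val : {x : V // x ≠ v} → V)) u := by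
  have hGd : ∀ w : {x : V // x ≠ v},
      (T.comap (Subtype.val : {x : V // x ≠ v} → V)).dist u w = T.dist u.val w.val :=
    fun w => dist_comap_eq hT hv u w
  have hsup : eccentricity (T.comap (Subtype.val : {x : V // x ≠ v} → V)) u =
      Finset.univ.sup (fun w : {x : V // x ≠ v} => T.dist u.val w.val) := by
    unfold eccentricity
    exact Finset.sup_congr rfl (fun w _ => hGd w)
  rw [hsup]
  unfold eccentricity
  apply le_antisymm
  · apply Finset.sup_le
    intro x _
    by_cases hx : x = v
    · subst hx
      have hle := tree_dist_le_max hT hdiam u.val x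
      have h1 : T.dist u.val a ≤
          Finset.univ.sup (fun w : {y : V // y ≠ x} => T.dist u.val w.val) :=
        Finset.le_sup (f := fun w : {y : V // y ≠ x} => T.dist u.val w.val)
          (Finset.mem_univ ⟨a, hva⟩)
      have h2 : T.dist u.val b ≤
          Finset.univ.sup (fun w : {y : V // y ≠ x} => T.dist u.val w.val) :=
        Finset.le_sup (f := fun w : {y : V // y ≠ x} => T.dist u.val w.val)
          (Finset.mem_univ ⟨b, hvb⟩)
      rcases max_cases (T.dist u.val a) (T.dist u.val b) with ⟨hm, _⟩ | ⟨hm, _⟩ <;> omega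
    · exact Finset.le_sup (f := fun w : {y : V // y ≠ v} => T.dist u.val w.val)
        (Finset.mem_univ ⟨x, hx⟩)
  · apply Finset.sup_le
    intro w _
    exact Finset.le_sup (Finset.mem_univ w.val)

lemma degree_pos_of_ne [Fintype V] [DecidableRel T.Adj] (hT : T.IsTree) {x y : V}
    (hxy : x ≠ y) : 0 < T.degree x := by
  obtain ⟨q, hq, hqlen⟩ := hT.isConnected.exists_path_of_dist x y
  have hpos : 0 < q.length := by
    rw [hqlen]; exact hT.isConnected.pos_dist_of_ne hxy
  have hadj : T.Adj x (q.getVert 1) := by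
    have := q.adj_getVert_succ (i := 0) hpos
    simpa using this
  rw [← card_neighborFinset_eq_degree, Finset.card_pos]
  exact ⟨q.getVert 1, (mem_neighborFinset _ _ _).mpr hadj⟩

lemma iso_singleton [Fintype V] (hsub : ∀ x y : V, x = y) :
    Nonempty (T ≃g pathGraph (Fintype.card V)) := by
  classical
  refine ⟨⟨Fintype.equivFin V, ?_⟩⟩
  intro x y
  constructor
  · intro h
    exfalso
    have := hsub x y
    subst this
    exact (pathGraph (Fintype.card V)).irrefl h
  · intro h
    exfalso
    have := hsub x y
    subst this
    exact T.irrefl h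

lemma iso_of_spanning_path [Fintype V] (hT : T.IsTree) {a b : V} {p : T.Walk a b}
    (hp : p.IsPath) (hspan : ∀ y : V, y ∈ p.support) :
    Nonempty (T ≃g pathGraph (Fintype.card V)) := by
  classical
  have hcard : p.support.length = Fintype.card V := by
    have h1 : p.support.toFinset = Finset.univ :=
      Finset.eq_univ_iff_forall.mpr fun y => List.mem_toFinset.mpr (hspan y)
    have h2 := List.toFinset_card_of_nodup hp.support_nodup
    rw [h1, Finset.card_univ] at h2
    omega
  have hlen : p.length + 1 = Fintype.card V := by
    rw [← hcard, Walk.length_support]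
  have hfi : ∀ i : Fin (Fintype.card V), (i : ℕ) ≤ p.length := fun i => by
    have := i.isLt; omega
  set f : Fin (Fintype.card V) → V := fun i => p.getVert i with hf
  have hinj : Function.Injective f := by
    intro i j hij
    exact Fin.ext (tree_getVert_injOn hT hp (hfi i) (hfi j) hij)
  have hsurj : Function.Surjective f := by
    intro y
    obtain ⟨i, hgv, hi⟩ := Walk.mem_support_iff_exists_getVert.mp (hspan y)
    exact ⟨⟨i, by omega⟩, hgv⟩
  set e := Equiv.ofBijective f ⟨hinj, hsurj⟩ with he
  have hiso : pathGraph (Fintype.card V) ≃g T := by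
    refine ⟨e, ?_⟩
    intro i j
    show T.Adj (p.getVert i) (p.getVert j) ↔ _
    rw [pathGraph_adj]
    constructor
    · intro hadj
      have h1 : T.dist (p.getVert i) (p.getVert j) = 1 := SimpleGraph.dist_eq_one_iff_adj.mpr hadj
      have hne : (i : ℕ) ≠ (j : ℕ) := by
        intro h
        have : i = j := Fin.ext h
        subst this
        exact T.irrefl hadj
      rcases le_total (i : ℕ) (j : ℕ) with h | h
      · have := tree_dist_getVert₂ hT hp h (hfi j)
        left; omega
      · have := tree_dist_getVert₂ hT hp h (hfi i)
        have hcomm : T.dist (p.getVert i) (p.getVert j) =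
            T.dist (p.getVert j) (p.getVert i) := SimpleGraph.dist_comm
        right; omega
    · intro hadj
      rcases hadj with h | h
      · have hlt : (i : ℕ) < p.length := by have := hfi j; omega
        have := p.adj_getVert_succ hlt
        rwa [h] at this
      · have hlt : (j : ℕ) < p.length := by have := hfi i; omega
        have := p.adj_getVert_succ hlt
        rw [h] at this
        exact this.symm
  exact ⟨hiso.symm⟩

lemma two_le_degree_of_two_neighbors [Fintype V] [DecidableRel T.Adj] {x s t : V}
    (hst : s ≠ t) (h1 : T.Adj x s) (h2 : T.Adj x t) : 2 ≤ T.degree x := by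
  have hsub : ({s, t} : Finset V) ⊆ T.neighborFinset x := by
    intro z hz
    rw [Finset.mem_insert, Finset.mem_singleton] at hz
    rcases hz with rfl | rfl
    · rwa [mem_neighborFinset]
    · rwa [mem_neighborFinset]
  have := Finset.card_le_card hsub
  rwa [Finset.card_pair hst, card_neighborFinset_eq_degree] at this

lemma three_le_degree_of_three_neighbors [Fintype V] [DecidableRel T.Adj] {x s t r : V}
    (hst : s ≠ t) (hsr : s ≠ r) (htr : t ≠ r)
    (h1 : T.Adj x s) (h2 : T.Adj x t) (h3 : T.Adj x r) : 3 ≤ T.degree x := by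
  have hsub : ({s, t, r} : Finset V) ⊆ T.neighborFinset x := by
    intro z hz
    simp only [Finset.mem_insert, Finset.mem_singleton] at hz
    rcases hz with rfl | rfl | rfl
    · rwa [mem_neighborFinset]
    · rwa [mem_neighborFinset]
    · rwa [mem_neighborFinset]
  have hcard : ({s, t, r} : Finset V).card = 3 := by
    rw [Finset.card_insert_of_notMem (by simp [hst, hsr]), Finset.card_pair htr]
  have := Finset.card_le_card hsub
  rwa [hcard, card_neighborFinset_eq_degree] at this

lemma degree_eq_two [Fintype V] [DecidableRel T.Adj] (hT : T.IsTree) {a b : V} (hab : a ≠ b)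
    (hdega : T.degree a = 1) (hdegb : T.degree b = 1)
    (hmin : ∀ x : V, x ≠ a → x ≠ b → 2 ≤ T.degree x)
    {x : V} (hxa : x ≠ a) (hxb : x ≠ b) : T.degree x = 2 := by
  have he := hT.card_edgeFinset
  have hsum0 := T.sum_degrees_eq_twice_card_edges
  have hsum : ∑ y : V, T.degree y = 2 * (Fintype.card V - 1) := by omega
  by_contra hne
  have h3 : 3 ≤ T.degree x := by
    have := hmin x hxa hxb; omega
  set s := (Finset.univ.erase a).erase b with hs
  have hbmem : b ∈ Finset.univ.erase a :=
    Finset.mem_erase.mpr ⟨Ne.symm hab, Finset.mem_univ b⟩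
  have hxs : x ∈ s := Finset.mem_erase.mpr ⟨hxb, Finset.mem_erase.mpr ⟨hxa, Finset.mem_univ x⟩⟩
  have hsum1 : T.degree a + ∑ y ∈ Finset.univ.erase a, T.degree y = ∑ y : V, T.degree y :=
    Finset.add_sum_erase _ (fun y => T.degree y) (Finset.mem_univ a)
  have hsum2 : T.degree b + ∑ y ∈ s, T.degree y = ∑ y ∈ Finset.univ.erase a, T.degree y :=
    Finset.add_sum_erase _ (fun y => T.degree y) hbmem
  have hsum3 : T.degree x + ∑ y ∈ s.erase x, T.degree y = ∑ y ∈ s, T.degree y :=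
    Finset.add_sum_erase _ (fun y => T.degree y) hxs
  have hge : (s.erase x).card * 2 ≤ ∑ y ∈ s.erase x, T.degree y := by
    have := Finset.card_nsmul_le_sum (s.erase x) (fun y => T.degree y) 2 ?_
    · simpa [smul_eq_mul] using this
    · intro y hy
      have hy1 := Finset.mem_erase.mp hy
      have hy2 := Finset.mem_erase.mp hy1.2
      have hy3 := Finset.mem_erase.mp hy2.2
      exact hmin y hy3.1 hy2.1
  have hca : (Finset.univ.erase a).card = Fintype.card V - 1 := by
    rw [Finset.card_erase_of_mem (Finset.mem_univ a), Finset.card_univ]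
  have hcb : s.card = Fintype.card V - 1 - 1 := by
    rw [hs, Finset.card_erase_of_mem hbmem, hca]
  have hcx : (s.erase x).card = s.card - 1 := Finset.card_erase_of_mem hxs
  have hn3 : 3 ≤ Fintype.card V := by
    have hc3 : ({x, a, b} : Finset V).card = 3 := by
      rw [Finset.card_insert_of_notMem (by simp [hxa, hxb]), Finset.card_pair hab]
    have := Finset.card_le_univ ({x, a, b} : Finset V)
    rw [hc3] at this
    exact this
  omega

lemma spanning_path [Fintype V] [DecidableRel T.Adj] (hT : T.IsTree) {a b : V} (hab : a ≠ b)
    (hdega : T.degree a = 1) (hdegb : T.degree b = 1)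
    (hdeg2 : ∀ x : V, x ≠ a → x ≠ b → T.degree x = 2)
    {p : T.Walk a b} (hp : p.IsPath) (hplen : p.length = T.dist a b) :
    ∀ y : V, y ∈ p.support := by
  classical
  have hpos : 0 < p.length := by
    rw [hplen]; exact hT.isConnected.pos_dist_of_ne hab
  have adj1 : T.Adj a (p.getVert 1) := by
    have := p.adj_getVert_succ (i := 0) hpos
    simpa using this
  have mem1 : p.getVert 1 ∈ p.support :=
    Walk.mem_support_iff_exists_getVert.mpr ⟨1, rfl, hpos⟩
  have adjb : T.Adj b (p.getVert (p.length - 1)) := by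
    have h := p.adj_getVert_succ (show p.length - 1 < p.length by omega)
    have h2 : p.length - 1 + 1 = p.length := by omega
    rw [h2, p.getVert_length] at h
    exact h.symm
  have memb : p.getVert (p.length - 1) ∈ p.support :=
    Walk.mem_support_iff_exists_getVert.mpr ⟨p.length - 1, rfl, by omega⟩
  intro y
  by_contra hy
  obtain ⟨r, hr, _⟩ := hT.isConnected.exists_path_of_dist y a
  obtain ⟨m, q, r1, hm, heq, hfirst⟩ :=
    exists_first_split {z | z ∈ p.support} r (by exact p.start_mem_support)
  have hq : q.IsPath := by rw [heq] at hr; exact hr.of_append_left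
  have hym : m ≠ y := by
    intro h; subst h; exact hy hm
  obtain ⟨prev, hadj, q₂, hrev⟩ := Walk.exists_eq_cons_of_ne hym q.reverse
  have hprevq : prev ∈ q.support := by
    have h1 : prev ∈ q.reverse.support := by
      rw [hrev, Walk.support_cons]
      exact List.mem_cons_of_mem _ q₂.start_mem_support
    rwa [Walk.support_reverse, List.mem_reverse] at h1
  have hprevS : prev ∉ p.support := by
    intro h
    exact hadj.ne (hfirst prev hprevq h).symm
  by_cases hma : m = a
  · subst hma
    have h2 : prev ≠ p.getVert 1 := fun h => hprevS (h ▸ mem1)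
    have := two_le_degree_of_two_neighbors h2 hadj adj1
    omega
  · by_cases hmb : m = b
    · subst hmb
      have h2 : prev ≠ p.getVert (p.length - 1) := fun h => hprevS (h ▸ memb)
      have := two_le_degree_of_two_neighbors h2 hadj adjb
      omega
    · obtain ⟨s, t, hst, hadjs, hadjt, hsmem, htmem⟩ :=
        internal_two_neighbors hT hp hm hma hmb
      have hsp : s ≠ prev := fun h => hprevS (h ▸ hsmem)
      have htp : t ≠ prev := fun h => hprevS (h ▸ htmem)
      have := three_le_degree_of_three_neighbors hst hsp htp hadjs hadjt hadj
      have := hdeg2 m hma hmb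
      omega


end EccAux

/-- If `T` is a tree on `n` vertices not isomorphic to the path `Pₙ`, then there exists a
pendant vertex `v` such that every other vertex has the same eccentricity in `T - v`
as in `T`. -/
theorem exists_pendant_eccentricity_eq {V : Type*} [Fintype V] [DecidableEq V]
    (T : SimpleGraph V) [DecidableRel T.Adj] (hT : T.IsTree)
    (hnotpath : ¬ Nonempty (T ≃g SimpleGraph.pathGraph (Fintype.card V))) :
    ∃ v : V, T.degree v = 1 ∧
      ∀ u : {x : V // x ≠ v},
        eccentricity T (u : V) = eccentricity (T.comap (Subtype.val : {x : V // x ≠ v} → V)) u := by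
  classical
  have hconn := hT.isConnected
  obtain ⟨x0⟩ := hconn.nonempty
  obtain ⟨⟨a, b⟩, -, hmax⟩ := Finset.exists_max_image (Finset.univ : Finset (V × V))
    (fun q => T.dist q.1 q.2) ⟨(x0, x0), Finset.mem_univ _⟩
  have hdiam : ∀ x y : V, T.dist x y ≤ T.dist a b := fun x y => hmax (x, y) (Finset.mem_univ _)
  by_cases hc : ∃ c : V, T.degree c = 1 ∧ c ≠ a ∧ c ≠ b
  · obtain ⟨c, hc1, hca, hcb⟩ := hc
    exact ⟨c, hc1, fun u => ecc_transfer hT hdiam hc1 (Ne.symm hca) (Ne.symm hcb) u⟩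
  · exfalso
    apply hnotpath
    by_cases hab : a = b
    · subst hab
      apply iso_singleton
      intro x y
      have h1 := hdiam x y
      have h2 : T.dist a a = 0 := SimpleGraph.dist_self
      exact (hconn.dist_eq_zero_iff).mp (by omega)
    · have hdega : T.degree a = 1 := diametral_degree_one hT hab hdiam
      have hdiam' : ∀ x y : V, T.dist x y ≤ T.dist b a := by
        intro x y
        have h := hdiam x y
        have h2 : T.dist b a = T.dist a b := SimpleGraph.dist_comm
        omega
      have hdegb : T.degree b = 1 := diametral_degree_one hT (Ne.symm hab) hdiam'
      have hmin : ∀ x : V, x ≠ a → x ≠ b → 2 ≤ T.degree x := by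
        intro x hxa hxb
        have h1 : T.degree x ≠ 1 := fun h => hc ⟨x, h, hxa, hxb⟩
        have h2 : 0 < T.degree x := degree_pos_of_ne hT hxa
        omega
      have hdeg2 : ∀ x : V, x ≠ a → x ≠ b → T.degree x = 2 :=
        fun x hxa hxb => degree_eq_two hT hab hdega hdegb hmin hxa hxb
      obtain ⟨p, hp, hplen⟩ := hconn.exists_path_of_dist a b
      have hspan := spanning_path hT hab hdega hdegb hdeg2 hp hplen
      exact iso_of_spanning_path hT hp hspan
end

section
/- For integers n and Δ with 2 ≤ Δ ≤ n−1, the broom B(n,Δ) satisfies ecc(B(n,Δ)) + α(B(n,Δ)) = 5n/4 − Δ(Δ−2)/(4n) − 1/2 if n−Δ is even, and ecc(B(n,Δ)) + α(B(n,Δ)) = 5n/4 − Δ(Δ−2)/(4n) − 1/(4n) if n−Δ is odd. -/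
open SimpleGraph

/-- The average eccentricity of a graph. -/
noncomputable def avgEcc {V : Type*} [Fintype V] (G : SimpleGraph V) : ℝ :=
  (∑ v : V, (eccentricity G v : ℝ)) / (Fintype.card V : ℝ)

/-- The independence number: the maximum cardinality of a set of pairwise
non-adjacent vertices. -/
noncomputable def indepNum {V : Type*} (G : SimpleGraph V) : ℕ :=
  sSup {m | ∃ s : Finset V, s.card = m ∧ ∀ u ∈ s, ∀ w ∈ s, u ≠ w → ¬ G.Adj u w}

/-- The broom `B(n, Δ)`: a path `0 — 1 — ⋯ — (n-Δ)` together with `Δ-1` pendant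
vertices `n-Δ+1, …, n-1` attached to the vertex `n-Δ`. -/
def broom (n Δ : ℕ) : SimpleGraph (Fin n) :=
  SimpleGraph.fromRel (fun i j =>
    ((i : ℕ) + 1 = (j : ℕ) ∧ (j : ℕ) ≤ n - Δ) ∨ ((i : ℕ) = n - Δ ∧ n - Δ < (j : ℕ)))

namespace BroomAux

lemma adj_iff {n Δ p : ℕ} (hn : n = Δ + p) {u v : Fin n} :
    (broom n Δ).Adj u v ↔ ((u : ℕ) ≠ (v : ℕ)) ∧
      (((u : ℕ) + 1 = (v : ℕ) ∧ (v : ℕ) ≤ p) ∨ ((u : ℕ) = p ∧ p < (v : ℕ)) ∨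
       ((v : ℕ) + 1 = (u : ℕ) ∧ (u : ℕ) ≤ p) ∨ ((v : ℕ) = p ∧ p < (u : ℕ))) := by
  subst hn
  have e : Δ + p - Δ = p := by omega
  rw [broom, SimpleGraph.fromRel_adj]
  rw [e]
  constructor
  · rintro ⟨hne, h⟩
    exact ⟨fun h' => hne (Fin.ext h'), by tauto⟩
  · rintro ⟨hne, h⟩
    exact ⟨fun h' => hne (by rw [h']), by tauto⟩

lemma exists_walk_path {n Δ p : ℕ} (hn : n = Δ + p) :
    ∀ (k : ℕ) (u v : Fin n), (u : ℕ) + k = (v : ℕ) → (v : ℕ) ≤ p →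
      ∃ w : (broom n Δ).Walk u v, w.length = k := by
  intro k
  induction k with
  | zero =>
    intro u v h _
    have : u = v := Fin.ext (by omega)
    subst this
    exact ⟨Walk.nil, rfl⟩
  | succ k ih =>
    intro u v h hv
    have hu1 : (u : ℕ) + 1 < n := by omega
    have hadj : (broom n Δ).Adj u ⟨(u : ℕ) + 1, hu1⟩ := by
      rw [adj_iff hn]; simp; omega
    obtain ⟨w, hw⟩ := ih ⟨(u : ℕ) + 1, hu1⟩ v (by simp; omega) hv
    exact ⟨Walk.cons hadj w, by simp [hw]⟩

lemma dist_le_path {n Δ p : ℕ} (hn : n = Δ + p) {u v : Fin n}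
    (hle : (u : ℕ) ≤ (v : ℕ)) (hv : (v : ℕ) ≤ p) :
    (broom n Δ).dist u v ≤ (v : ℕ) - (u : ℕ) := by
  obtain ⟨w, hw⟩ := exists_walk_path hn ((v : ℕ) - (u : ℕ)) u v (by omega) hv
  exact hw ▸ SimpleGraph.dist_le w

lemma reach {n Δ p : ℕ} (hn : n = Δ + p) (hΔ : 2 ≤ Δ) (hp : 1 ≤ p) (u v : Fin n) :
    (broom n Δ).Reachable u v := by
  have hpn : p < n := by omega
  have key : ∀ u : Fin n, (broom n Δ).Reachable u ⟨p, hpn⟩ := by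
    intro u
    by_cases h : (u : ℕ) ≤ p
    · obtain ⟨w, _⟩ := exists_walk_path hn (p - (u : ℕ)) u ⟨p, hpn⟩ (by simp; omega) (by simp)
      exact ⟨w⟩
    · refine SimpleGraph.Adj.reachable ?_
      rw [adj_iff hn]; simp; omega
  exact (key u).trans (key v).symm

lemma walk_bound {V : Type*} {G : SimpleGraph V} {f : V → ℕ}
    (hf : ∀ u v, G.Adj u v → f v ≤ f u + 1) {u v : V} (w : G.Walk u v) :
    f v ≤ f u + w.length := by
  induction w with
  | nil => omega
  | @cons a b c h q ih =>
    have := hf a b h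
    rw [SimpleGraph.Walk.length_cons]
    omega

lemma dist_lower {n Δ p : ℕ} (hn : n = Δ + p) (hΔ : 2 ≤ Δ) (hp : 1 ≤ p) (u v : Fin n) :
    min (v : ℕ) (p + 1) ≤ min (u : ℕ) (p + 1) + (broom n Δ).dist u v := by
  obtain ⟨w, hw⟩ := (reach hn hΔ hp u v).exists_walk_length_eq_dist
  have h2 : min (v : ℕ) (p + 1) ≤ min (u : ℕ) (p + 1) + w.length :=
    walk_bound (f := fun x : Fin n => min (x : ℕ) (p + 1))
      (fun a b hab => by rw [adj_iff hn] at hab; omega) w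
  omega

lemma dist_path {n Δ p : ℕ} (hn : n = Δ + p) (hΔ : 2 ≤ Δ) (hp : 1 ≤ p) {u v : Fin n}
    (hle : (u : ℕ) ≤ (v : ℕ)) (hv : (v : ℕ) ≤ p) :
    (broom n Δ).dist u v = (v : ℕ) - (u : ℕ) := by
  refine le_antisymm (dist_le_path hn hle hv) ?_
  have := dist_lower hn hΔ hp u v
  omega

lemma dist_toPend {n Δ p : ℕ} (hn : n = Δ + p) (hΔ : 2 ≤ Δ) (hp : 1 ≤ p) {u v : Fin n}
    (hu : (u : ℕ) ≤ p) (hv : p < (v : ℕ)) :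
    (broom n Δ).dist u v = p + 1 - (u : ℕ) := by
  have hpn : p < n := by omega
  refine le_antisymm ?_ ?_
  · obtain ⟨w, hw⟩ := exists_walk_path hn (p - (u : ℕ)) u ⟨p, hpn⟩ (by simp; omega) (by simp)
    have hadj : (broom n Δ).Adj ⟨p, hpn⟩ v := by
      rw [adj_iff hn]; simp; omega
    have := SimpleGraph.dist_le (w.concat hadj)
    rw [SimpleGraph.Walk.length_concat, hw] at this
    omega
  · have := dist_lower hn hΔ hp u v
    omega

lemma dist_pends {n Δ p : ℕ} (hn : n = Δ + p) (hΔ : 2 ≤ Δ) (hp : 1 ≤ p) {u v : Fin n}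
    (hu : p < (u : ℕ)) (hv : p < (v : ℕ)) (huv : u ≠ v) :
    (broom n Δ).dist u v = 2 := by
  have hpn : p < n := by omega
  have h1 : (broom n Δ).Adj u ⟨p, hpn⟩ := by rw [adj_iff hn]; simp; omega
  have h2 : (broom n Δ).Adj ⟨p, hpn⟩ v := by rw [adj_iff hn]; simp; omega
  have hub := SimpleGraph.dist_le (Walk.cons h1 (Walk.cons h2 Walk.nil))
  simp only [SimpleGraph.Walk.length_cons, SimpleGraph.Walk.length_nil] at hub
  have h0 : (broom n Δ).dist u v ≠ 0 :=
    fun h => huv (((reach hn hΔ hp u v).dist_eq_zero_iff).mp h)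
  have hone : (broom n Δ).dist u v ≠ 1 := by
    intro h
    have := SimpleGraph.dist_eq_one_iff_adj.mp h
    rw [adj_iff hn] at this
    omega
  omega

lemma ecc_path {n Δ p : ℕ} (hn : n = Δ + p) (hΔ : 2 ≤ Δ) (hp : 1 ≤ p) {v : Fin n}
    (hv : (v : ℕ) ≤ p) :
    eccentricity (broom n Δ) v = max (v : ℕ) (p + 1 - (v : ℕ)) := by
  have h0n : 0 < n := by omega
  have hp1n : p + 1 < n := by omega
  refine le_antisymm (Finset.sup_le ?_) ?_
  · intro u _
    rcases le_or_gt (u : ℕ) p with h | h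
    · rcases le_total (v : ℕ) (u : ℕ) with h2 | h2
      · rw [dist_path hn hΔ hp h2 h]; omega
      · rw [SimpleGraph.dist_comm, dist_path hn hΔ hp h2 hv]; omega
    · rw [dist_toPend hn hΔ hp hv h]; omega
  · have hA : (v : ℕ) ≤ eccentricity (broom n Δ) v := by
      have hm := Finset.le_sup (f := fun u => (broom n Δ).dist v u)
        (Finset.mem_univ (⟨0, h0n⟩ : Fin n))
      rw [SimpleGraph.dist_comm,
        dist_path hn hΔ hp (by simp : ((⟨0, h0n⟩ : Fin n) : ℕ) ≤ (v : ℕ)) hv] at hm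
      simpa [eccentricity] using hm
    have hB : p + 1 - (v : ℕ) ≤ eccentricity (broom n Δ) v := by
      have hm := Finset.le_sup (f := fun u => (broom n Δ).dist v u)
        (Finset.mem_univ (⟨p + 1, hp1n⟩ : Fin n))
      rw [dist_toPend hn hΔ hp hv (by simp)] at hm
      exact hm
    exact max_le hA hB

lemma ecc_pend {n Δ p : ℕ} (hn : n = Δ + p) (hΔ : 2 ≤ Δ) (hp : 1 ≤ p) {v : Fin n}
    (hv : p < (v : ℕ)) :
    eccentricity (broom n Δ) v = p + 1 := by
  have h0n : 0 < n := by omega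
  refine le_antisymm (Finset.sup_le ?_) ?_
  · intro u _
    rcases le_or_gt (u : ℕ) p with h | h
    · rw [SimpleGraph.dist_comm, dist_toPend hn hΔ hp h hv]; omega
    · rcases eq_or_ne v u with h2 | h2
      · subst h2; rw [SimpleGraph.dist_self]; omega
      · rw [dist_pends hn hΔ hp hv h h2]; omega
  · have hm := Finset.le_sup (f := fun u => (broom n Δ).dist v u)
      (Finset.mem_univ (⟨0, h0n⟩ : Fin n))
    rw [SimpleGraph.dist_comm, dist_toPend hn hΔ hp (by simp) hv] at hm
    simp only [Fin.val_mk, Nat.sub_zero] at hm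
    exact hm

/-- The path-part eccentricity sum. -/
def broomS (p : ℕ) : ℕ := ∑ i ∈ Finset.range (p + 1), max i (p + 1 - i)

lemma broomS_step (p : ℕ) : broomS (p + 2) = broomS p + 3 * p + 6 := by
  have h0 : broomS (p + 2)
      = (∑ i ∈ Finset.range (p + 2), max (i + 1) (p + 2 + 1 - (i + 1)))
        + max 0 (p + 2 + 1 - 0) := by
    unfold broomS
    exact Finset.sum_range_succ' (fun i => max i (p + 2 + 1 - i)) (p + 2)
  have h1 : (∑ i ∈ Finset.range (p + 2), max (i + 1) (p + 2 + 1 - (i + 1)))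
      = ∑ i ∈ Finset.range (p + 2), (max i (p + 1 - i) + 1) := by
    refine Finset.sum_congr rfl (fun i hi => ?_)
    rw [Finset.mem_range] at hi
    omega
  have h2 : (∑ i ∈ Finset.range (p + 2), (max i (p + 1 - i) + 1))
      = (∑ i ∈ Finset.range (p + 2), max i (p + 1 - i)) + (p + 2) := by
    rw [Finset.sum_add_distrib, Finset.sum_const, Finset.card_range, smul_eq_mul, mul_one]
  have h3 : (∑ i ∈ Finset.range (p + 2), max i (p + 1 - i))
      = broomS p + max (p + 1) (p + 1 - (p + 1)) := by
    unfold broomS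
    exact Finset.sum_range_succ (fun i => max i (p + 1 - i)) (p + 1)
  rw [h0, h1, h2, h3]
  omega

lemma broomS_even : ∀ t, broomS (2 * t) = 3 * t ^ 2 + 3 * t + 1 := by
  intro t
  induction t with
  | zero => norm_num [broomS, Finset.sum_range_succ]
  | succ t ih =>
    have h : 2 * (t + 1) = 2 * t + 2 := by ring
    rw [h, broomS_step, ih]; ring

lemma broomS_odd : ∀ t, broomS (2 * t + 1) = 3 * (t + 1) ^ 2 := by
  intro t
  induction t with
  | zero => norm_num [broomS, Finset.sum_range_succ]
  | succ t ih =>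
    have h : 2 * (t + 1) + 1 = (2 * t + 1) + 2 := by ring
    rw [h, broomS_step, ih]; ring

lemma sum_ecc {n Δ p : ℕ} (hn : n = Δ + p) (hΔ : 2 ≤ Δ) (hp : 1 ≤ p) :
    ∑ v : Fin n, eccentricity (broom n Δ) v = broomS p + (Δ - 1) * (p + 1) := by
  have h1 : ∑ v : Fin n, eccentricity (broom n Δ) v
      = ∑ i ∈ Finset.range n, (if i ≤ p then max i (p + 1 - i) else p + 1) := by
    rw [← Fin.sum_univ_eq_sum_range (fun i => if i ≤ p then max i (p + 1 - i) else p + 1) n]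
    refine Finset.sum_congr rfl (fun v _ => ?_)
    by_cases h : (v : ℕ) ≤ p
    · rw [if_pos h, ecc_path hn hΔ hp h]
    · rw [if_neg h, ecc_pend hn hΔ hp (by omega)]
  rw [h1, Finset.range_eq_Ico, ← Finset.sum_Ico_consecutive _ (Nat.zero_le (p + 1))
    (by omega : p + 1 ≤ n)]
  have h2 : ∑ i ∈ Finset.Ico 0 (p + 1), (if i ≤ p then max i (p + 1 - i) else p + 1)
      = broomS p := by
    rw [← Finset.range_eq_Ico]
    refine Finset.sum_congr rfl (fun i hi => ?_)
    rw [Finset.mem_range] at hi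
    rw [if_pos (by omega)]
  have h3 : ∑ i ∈ Finset.Ico (p + 1) n, (if i ≤ p then max i (p + 1 - i) else p + 1)
      = (Δ - 1) * (p + 1) := by
    have hc : ∑ i ∈ Finset.Ico (p + 1) n, (if i ≤ p then max i (p + 1 - i) else p + 1)
        = ∑ _i ∈ Finset.Ico (p + 1) n, (p + 1) := by
      refine Finset.sum_congr rfl (fun i hi => ?_)
      rw [Finset.mem_Ico] at hi
      rw [if_neg (by omega)]
    rw [hc, Finset.sum_const, Nat.card_Ico, smul_eq_mul,
      show n - (p + 1) = Δ - 1 by omega]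
  rw [h2, h3]

lemma cnt_even : ∀ m, ((Finset.range m).filter (fun i => i % 2 = 0)).card = (m + 1) / 2 := by
  intro m
  induction m with
  | zero => simp
  | succ k ih =>
    rw [Finset.range_add_one, Finset.filter_insert]
    by_cases h : k % 2 = 0
    · rw [if_pos h, Finset.card_insert_of_notMem (by simp), ih]; omega
    · rw [if_neg h, ih]; omega

/-- A maximum independent set in the broom. -/
def indSet (n p : ℕ) : Finset (Fin n) :=
  Finset.univ.filter (fun v => ((v : ℕ) < p ∧ (v : ℕ) % 2 = 0) ∨ p < (v : ℕ))

lemma indSet_card {n Δ p : ℕ} (hn : n = Δ + p) (hΔ : 2 ≤ Δ) (hp : 1 ≤ p) :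
    (indSet n p).card = (p + 1) / 2 + (Δ - 1) := by
  have hcard : (indSet n p).card
      = ((Finset.range n).filter (fun i => (i < p ∧ i % 2 = 0) ∨ p < i)).card := by
    refine Finset.card_bij (fun a _ => (a : ℕ)) ?_ ?_ ?_
    · intro a ha
      simp only [indSet, Finset.mem_filter, Finset.mem_univ, true_and] at ha
      simp only [Finset.mem_filter, Finset.mem_range]
      exact ⟨a.isLt, ha⟩
    · intro a _ b _ h
      exact Fin.ext h
    · intro b hb
      simp only [Finset.mem_filter, Finset.mem_range] at hb
      refine ⟨⟨b, hb.1⟩, ?_, rfl⟩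
      simp only [indSet, Finset.mem_filter, Finset.mem_univ, true_and]
      exact hb.2
  rw [hcard, Finset.filter_or, Finset.card_union_of_disjoint (by
    simp only [Finset.disjoint_filter]
    intro x _ hx
    omega)]
  have e1 : (Finset.range n).filter (fun i => i < p ∧ i % 2 = 0)
      = (Finset.range p).filter (fun i => i % 2 = 0) := by
    ext i
    simp only [Finset.mem_filter, Finset.mem_range]
    omega
  have e2 : (Finset.range n).filter (fun i => p < i) = Finset.Ico (p + 1) n := by
    ext i
    simp only [Finset.mem_filter, Finset.mem_range, Finset.mem_Ico]
    omega
  rw [e1, e2, cnt_even, Nat.card_Ico, show n - (p + 1) = Δ - 1 by omega]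

lemma indSet_indep {n Δ p : ℕ} (hn : n = Δ + p) :
    ∀ u ∈ indSet n p, ∀ w ∈ indSet n p, u ≠ w → ¬ (broom n Δ).Adj u w := by
  intro u hu w hw _ hadj
  rw [adj_iff hn] at hadj
  simp only [indSet, Finset.mem_filter, Finset.mem_univ, true_and] at hu hw
  omega

lemma path_part_le' {n Δ p : ℕ} (hn : n = Δ + p) (hΔ : 2 ≤ Δ) (hp : 1 ≤ p)
    (s : Finset (Fin n)) (hs : ∀ u ∈ s, ∀ w ∈ s, u ≠ w → ¬ (broom n Δ).Adj u w)
    (k : ℕ) (hkp : k ≤ p + 1) (hk : ∀ v ∈ s, (v : ℕ) < k) : s.card ≤ (k + 1) / 2 := by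
  classical
  have hadjc : ∀ a b : Fin n, (a : ℕ) + 1 = (b : ℕ) → (b : ℕ) ≤ p → (broom n Δ).Adj a b := by
    intro a b h1 h2
    rw [adj_iff hn]
    omega
  have := Finset.card_le_card_of_injOn (t := Finset.range ((k + 1) / 2))
    (fun v : Fin n => (v : ℕ) / 2)
    (fun v hv => by
      simp only [Finset.mem_coe, Finset.mem_range]
      have := hk v hv
      omega)
    (fun a ha b hb hab => by
      simp only [Finset.mem_coe] at ha hb
      dsimp only at hab
      by_contra hne
      have hane : (a : ℕ) ≠ (b : ℕ) := fun h => hne (Fin.ext h)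
      have hak := hk a ha
      have hbk := hk b hb
      rcases (by omega : (a : ℕ) + 1 = (b : ℕ) ∨ (b : ℕ) + 1 = (a : ℕ)) with h | h
      · exact hs a ha b hb hne (hadjc a b h (by omega))
      · exact hs b hb a ha (fun e => hne e.symm) (hadjc b a h (by omega)))
  simpa using this

lemma indep_le {n Δ p : ℕ} (hn : n = Δ + p) (hΔ : 2 ≤ Δ) (hp : 1 ≤ p)
    (s : Finset (Fin n)) (hs : ∀ u ∈ s, ∀ w ∈ s, u ≠ w → ¬ (broom n Δ).Adj u w) :
    s.card ≤ (p + 1) / 2 + (Δ - 1) := by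
  classical
  have hcard : (s.filter (fun v : Fin n => (v : ℕ) ≤ p)).card
      + (s.filter (fun v : Fin n => ¬ (v : ℕ) ≤ p)).card = s.card := by
    exact Finset.card_filter_add_card_filter_not (fun v : Fin n => (v : ℕ) ≤ p)
  have hs1ind : ∀ u ∈ s.filter (fun v : Fin n => (v : ℕ) ≤ p),
      ∀ w ∈ s.filter (fun v : Fin n => (v : ℕ) ≤ p), u ≠ w → ¬ (broom n Δ).Adj u w := by
    intro u hu w hw
    exact hs u (Finset.mem_filter.mp hu).1 w (Finset.mem_filter.mp hw).1
  have hs₂card : (s.filter (fun v : Fin n => ¬ (v : ℕ) ≤ p)).card ≤ Δ - 1 := by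
    have := Finset.card_le_card_of_injOn
      (s := s.filter (fun v : Fin n => ¬ (v : ℕ) ≤ p)) (t := Finset.range (Δ - 1))
      (fun v : Fin n => (v : ℕ) - (p + 1))
      (fun v hv => by
        rw [Finset.mem_coe, Finset.mem_filter] at hv
        have := v.isLt
        simp only [Finset.mem_coe, Finset.mem_range]
        omega)
      (fun a ha b hb hab => by
        simp only [Finset.mem_coe, Finset.mem_filter] at ha hb
        dsimp only at hab
        exact Fin.ext (by omega))
    simpa using this
  rcases (s.filter (fun v : Fin n => ¬ (v : ℕ) ≤ p)).eq_empty_or_nonempty with h2 | ⟨w0, hw0⟩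
  · have h2c : (s.filter (fun v : Fin n => ¬ (v : ℕ) ≤ p)).card = 0 := by rw [h2]; rfl
    have h1 : (s.filter (fun v : Fin n => (v : ℕ) ≤ p)).card ≤ (p + 1 + 1) / 2 := by
      refine path_part_le' hn hΔ hp _ hs1ind (p + 1) (by omega) (fun v hv => ?_)
      have := (Finset.mem_filter.mp hv).2
      omega
    omega
  · have hw0' := Finset.mem_filter.mp hw0
    have hvlt : ∀ v ∈ s.filter (fun v : Fin n => (v : ℕ) ≤ p), (v : ℕ) < p := by
      intro v hv
      have hv' := Finset.mem_filter.mp hv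
      by_contra h
      have hvp : (v : ℕ) = p := by omega
      have hadj : (broom n Δ).Adj v w0 := by
        rw [adj_iff hn]
        omega
      exact hs v hv'.1 w0 hw0'.1 (fun e => by rw [e] at hvp; omega) hadj
    have h1 : (s.filter (fun v : Fin n => (v : ℕ) ≤ p)).card ≤ (p + 1) / 2 :=
      path_part_le' hn hΔ hp _ hs1ind p (by omega) hvlt
    omega

lemma indepNum_broom {n Δ p : ℕ} (hn : n = Δ + p) (hΔ : 2 ≤ Δ) (hp : 1 ≤ p) :
    _root_.indepNum (broom n Δ) = (p + 1) / 2 + (Δ - 1) := by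
  unfold _root_.indepNum
  apply le_antisymm
  · refine csSup_le ⟨0, ∅, by simp, by simp⟩ ?_
    rintro m ⟨s, rfl, hsind⟩
    exact indep_le hn hΔ hp s hsind
  · refine le_csSup ⟨n, ?_⟩ ⟨indSet n p, indSet_card hn hΔ hp, indSet_indep hn⟩
    rintro m ⟨s, rfl, -⟩
    exact (Finset.card_le_univ s).trans (by simp)

end BroomAux

open BroomAux in
/-- For `2 ≤ Δ ≤ n - 1`,
`ecc (B(n,Δ)) + α(B(n,Δ)) = 5n/4 - Δ(Δ-2)/(4n) - 1/2` if `n - Δ` is even, and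
`ecc (B(n,Δ)) + α(B(n,Δ)) = 5n/4 - Δ(Δ-2)/(4n) - 1/(4n)` if `n - Δ` is odd. -/
theorem avgEcc_add_indepNum_broom {n Δ : ℕ} (hΔ : 2 ≤ Δ) (hΔn : Δ ≤ n - 1) :
    (Even (n - Δ) →
      avgEcc (broom n Δ) + (_root_.indepNum (broom n Δ) : ℝ) =
        5 * (n : ℝ) / 4 - (Δ : ℝ) * ((Δ : ℝ) - 2) / (4 * n) - 1 / 2) ∧
    (Odd (n - Δ) →
      avgEcc (broom n Δ) + (_root_.indepNum (broom n Δ) : ℝ) =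
        5 * (n : ℝ) / 4 - (Δ : ℝ) * ((Δ : ℝ) - 2) / (4 * n) - 1 / (4 * n)) := by
  obtain ⟨p, hp, hn⟩ : ∃ p, 1 ≤ p ∧ n = Δ + p := ⟨n - Δ, by omega, by omega⟩
  have hnΔ : n - Δ = p := by omega
  have hΔ1 : ((Δ - 1 : ℕ) : ℝ) = (Δ : ℝ) - 1 := by
    rw [Nat.cast_sub (by omega)]; simp
  have hne : (n : ℝ) ≠ 0 := Nat.cast_ne_zero.mpr (by omega)
  have havg : avgEcc (broom n Δ) = ((broomS p : ℝ) + ((Δ : ℝ) - 1) * ((p : ℝ) + 1)) / n := by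
    unfold avgEcc
    rw [Fintype.card_fin]
    congr 1
    rw [← Nat.cast_sum, sum_ecc hn hΔ hp]
    push_cast [Nat.cast_sub (show 1 ≤ Δ by omega)]
    ring
  have hind : (_root_.indepNum (broom n Δ) : ℝ) = (((p + 1) / 2 : ℕ) : ℝ) + ((Δ : ℝ) - 1) := by
    rw [indepNum_broom hn hΔ hp]
    push_cast [Nat.cast_sub (show 1 ≤ Δ by omega)]
    ring
  constructor
  · intro heven
    rw [hnΔ] at heven
    obtain ⟨t, ht⟩ := heven
    have e1 : broomS p = 3 * t ^ 2 + 3 * t + 1 := by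
      rw [show p = 2 * t by omega]; exact broomS_even t
    have e2 : (p + 1) / 2 = t := by omega
    have hpr : (p : ℝ) = 2 * t := by
      rw [show p = 2 * t by omega]; push_cast; ring
    have hnr : (n : ℝ) = (Δ : ℝ) + 2 * t := by
      rw [hn, show p = 2 * t by omega]; push_cast; ring
    rw [havg, hind, e1, e2, hpr, hnr]
    have hne' : (Δ : ℝ) + 2 * t ≠ 0 := by rw [← hnr]; exact hne
    push_cast
    field_simp
    ring
  · intro hodd
    rw [hnΔ] at hodd
    obtain ⟨t, ht⟩ := hodd
    have e1 : broomS p = 3 * (t + 1) ^ 2 := by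
      rw [show p = 2 * t + 1 by omega]; exact broomS_odd t
    have e2 : (p + 1) / 2 = t + 1 := by omega
    have hpr : (p : ℝ) = 2 * t + 1 := by
      rw [show p = 2 * t + 1 by omega]; push_cast; ring
    have hnr : (n : ℝ) = (Δ : ℝ) + 2 * t + 1 := by
      rw [hn, show p = 2 * t + 1 by omega]; push_cast; ring
    rw [havg, hind, e1, e2, hpr, hnr]
    have hne' : (Δ : ℝ) + 2 * t + 1 ≠ 0 := by rw [← hnr]; exact hne
    push_cast
    field_simp
    ring
end

section
/- For every integer n ≥ 4, the broom B(n,3) satisfies ecc(B(n,3)) ≤ ecc(P_n) − 1/2 − 1/(2n), with equality if and only if n is odd. Moreover, ecc(B(n,3)) = ((n−1)·ecc(P_{n−1}) + (n−2))/n. -/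
open SimpleGraph

/-! ### Auxiliary numeric sums -/

def Tsum (n : ℕ) : ℕ := ∑ i ∈ Finset.range n, max i (n - 1 - i)

lemma Tsum_succ (n : ℕ) : Tsum (n + 1) = Tsum n + n + (n + 1) / 2 := by
  unfold Tsum
  rw [Finset.sum_range_succ]
  have h1 : ∑ i ∈ Finset.range n, max i (n + 1 - 1 - i)
      = ∑ i ∈ Finset.range n, (max i (n - 1 - i) + if 2 * i < n then 1 else 0) := by
    apply Finset.sum_congr rfl
    intro i hi
    simp only [Finset.mem_range] at hi
    split <;> omega
  have h2 : ∑ i ∈ Finset.range n, (if 2 * i < n then (1 : ℕ) else 0) = (n + 1) / 2 := by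
    rw [← Finset.sum_filter]
    have : (Finset.range n).filter (fun i => 2 * i < n) = Finset.range ((n + 1) / 2) := by
      ext i
      simp only [Finset.mem_filter, Finset.mem_range]
      omega
    simp [this]
  rw [h1, Finset.sum_add_distrib, h2]
  omega

lemma Tsum_even_odd : ∀ m : ℕ, Tsum (2 * m) + m = 3 * (m * m) ∧
    Tsum (2 * m + 1) = 3 * (m * m) + 2 * m := by
  intro m
  induction m with
  | zero => simp [Tsum]
  | succ m ih =>
    have h1 := Tsum_succ (2 * m)
    have h2 := Tsum_succ (2 * m + 1)
    have h3 := Tsum_succ (2 * m + 1 + 1)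
    have e1 : 2 * (m + 1) = 2 * m + 1 + 1 := by ring
    rw [e1]
    have hmm : (m + 1) * (m + 1) = m * m + 2 * m + 1 := by ring
    obtain ⟨ihl, ihr⟩ := ih
    generalize hq1 : m * m = q1 at *
    generalize hq2 : (m + 1) * (m + 1) = q2 at *
    omega

/-! ### Distance lower bounds via 1-Lipschitz potentials -/

lemma f_walk_bound {V : Type*} {G : SimpleGraph V} {f : V → ℕ}
    (hf : ∀ u v : V, G.Adj u v → f v ≤ f u + 1) :
    ∀ {u v : V} (p : G.Walk u v), f v ≤ f u + p.length := by
  intro u v p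
  induction p with
  | nil => simp
  | cons h p ih =>
    simp only [Walk.length_cons]
    have := hf _ _ h
    omega

lemma f_dist_bound {V : Type*} {G : SimpleGraph V} {f : V → ℕ}
    (hf : ∀ u v : V, G.Adj u v → f v ≤ f u + 1) {u v : V} (hr : G.Reachable u v) :
    f v ≤ f u + G.dist u v := by
  obtain ⟨p, hp⟩ := hr.exists_walk_length_eq_dist
  simpa [hp] using f_walk_bound hf p

/-! ### The path graph -/

lemma path_walk {n : ℕ} (d : ℕ) : ∀ i j : Fin n, (j : ℕ) = (i : ℕ) + d →
    ∃ p : (pathGraph n).Walk i j, p.length = d := by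
  induction d with
  | zero =>
    intro i j h
    have : i = j := Fin.ext (by omega)
    subst this
    exact ⟨Walk.nil, rfl⟩
  | succ d ih =>
    intro i j h
    have hi : (i : ℕ) + 1 < n := by have := j.isLt; omega
    have hadj : (pathGraph n).Adj i ⟨i + 1, hi⟩ := pathGraph_adj.2 (Or.inl rfl)
    obtain ⟨p, hp⟩ := ih ⟨i + 1, hi⟩ j (by simp; omega)
    exact ⟨Walk.cons hadj p, by simp [hp]⟩

lemma path_dist {n : ℕ} (i j : Fin n) :
    (pathGraph n).dist i j = max (i : ℕ) (j : ℕ) - min (i : ℕ) (j : ℕ) := by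
  rcases le_total (i : ℕ) (j : ℕ) with h | h
  · obtain ⟨p, hp⟩ := path_walk ((j : ℕ) - i) i j (by omega)
    have h1 : (pathGraph n).dist i j ≤ (j : ℕ) - i := hp ▸ dist_le p
    have h2 : (j : ℕ) ≤ (i : ℕ) + (pathGraph n).dist i j :=
      f_dist_bound (f := Fin.val) (fun u v huv => by
        rcases pathGraph_adj.1 huv with h | h <;> omega) ⟨p⟩
    omega
  · obtain ⟨p, hp⟩ := path_walk ((i : ℕ) - j) j i (by omega)
    have h1 : (pathGraph n).dist j i ≤ (i : ℕ) - j := hp ▸ dist_le p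
    have h2 : (i : ℕ) ≤ (j : ℕ) + (pathGraph n).dist j i :=
      f_dist_bound (f := Fin.val) (fun u v huv => by
        rcases pathGraph_adj.1 huv with h | h <;> omega) ⟨p⟩
    rw [SimpleGraph.dist_comm]
    omega

lemma path_ecc {n : ℕ} (v : Fin n) :
    eccentricity (pathGraph n) v = max (v : ℕ) (n - 1 - (v : ℕ)) := by
  have h0 : 0 < n := v.pos
  apply le_antisymm
  · apply Finset.sup_le
    intro u _
    rw [path_dist]
    have := u.isLt
    have := v.isLt
    omega
  · have e1 : (pathGraph n).dist v ⟨0, h0⟩ ≤ eccentricity (pathGraph n) v :=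
      Finset.le_sup (Finset.mem_univ _)
    have e2 : (pathGraph n).dist v ⟨n - 1, by omega⟩ ≤ eccentricity (pathGraph n) v :=
      Finset.le_sup (Finset.mem_univ _)
    rw [path_dist] at e1 e2
    simp only [Fin.val_mk] at e1 e2
    have := v.isLt
    omega

lemma path_ecc_sum {n : ℕ} :
    ∑ v : Fin n, eccentricity (pathGraph n) v = Tsum n := by
  rw [Tsum, ← Fin.sum_univ_eq_sum_range]
  exact Finset.sum_congr rfl fun v _ => path_ecc v

/-! ### The broom -/

lemma broom_adj {n : ℕ} {u v : Fin n} : (broom n 3).Adj u v ↔ (u : ℕ) ≠ (v : ℕ) ∧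
    (((u : ℕ) + 1 = (v : ℕ) ∧ (v : ℕ) ≤ n - 3) ∨ ((u : ℕ) = n - 3 ∧ n - 3 < (v : ℕ)) ∨
     ((v : ℕ) + 1 = (u : ℕ) ∧ (u : ℕ) ≤ n - 3) ∨ ((v : ℕ) = n - 3 ∧ n - 3 < (u : ℕ))) := by
  simp only [broom, fromRel_adj, ne_eq, Fin.ext_iff]
  tauto

lemma broom_spine_walk {n : ℕ} (d : ℕ) : ∀ i j : Fin n, (j : ℕ) = (i : ℕ) + d →
    (j : ℕ) ≤ n - 3 → ∃ p : (broom n 3).Walk i j, p.length = d := by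
  induction d with
  | zero =>
    intro i j h _
    have : i = j := Fin.ext (by omega)
    subst this
    exact ⟨Walk.nil, rfl⟩
  | succ d ih =>
    intro i j h hj
    have hi : (i : ℕ) + 1 < n := by have := j.isLt; omega
    have hadj : (broom n 3).Adj i ⟨i + 1, hi⟩ :=
      broom_adj.2 ⟨by simp, Or.inl ⟨by simp, by simp; omega⟩⟩
    obtain ⟨p, hp⟩ := ih ⟨i + 1, hi⟩ j (by simp; omega) hj
    exact ⟨Walk.cons hadj p, by simp [hp]⟩

lemma broom_hub_adj {n : ℕ} (hn : 4 ≤ n) {u : Fin n} (hu : n - 3 < (u : ℕ)) :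
    (broom n 3).Adj ⟨n - 3, by omega⟩ u :=
  broom_adj.2 ⟨by simp; omega, Or.inr (Or.inl ⟨by simp, by simpa using hu⟩)⟩

lemma broom_reach_hub {n : ℕ} (hn : 4 ≤ n) (u : Fin n) :
    (broom n 3).Reachable ⟨n - 3, by omega⟩ u := by
  by_cases hu : (u : ℕ) ≤ n - 3
  · obtain ⟨p, _⟩ := broom_spine_walk (n - 3 - (u : ℕ)) u ⟨n - 3, by omega⟩
      (by simp; omega) (by simp)
    exact ⟨p.reverse⟩
  · exact (broom_hub_adj hn (by omega)).reachable

lemma broom_dist_le {n : ℕ} (hn : 4 ≤ n) (v u : Fin n) :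
    (broom n 3).dist v u ≤ max (min (v : ℕ) (n - 2)) (n - 2 - (v : ℕ)) := by
  have hv := v.isLt
  have hu := u.isLt
  by_cases hv3 : (v : ℕ) ≤ n - 3
  · by_cases hu3 : (u : ℕ) ≤ n - 3
    · rcases le_total (u : ℕ) (v : ℕ) with h | h
      · obtain ⟨p, hp⟩ := broom_spine_walk ((v : ℕ) - u) u v (by omega) hv3
        have hd := dist_le p.reverse
        rw [Walk.length_reverse, hp] at hd
        omega
      · obtain ⟨p, hp⟩ := broom_spine_walk ((u : ℕ) - v) v u (by omega) hu3
        have hd := dist_le p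
        rw [hp] at hd
        omega
    · obtain ⟨p, hp⟩ := broom_spine_walk (n - 3 - (v : ℕ)) v ⟨n - 3, by omega⟩
        (by simp; omega) (by simp)
      have hd := dist_le (p.concat (broom_hub_adj hn (u := u) (by omega)))
      rw [Walk.length_concat, hp] at hd
      omega
  · have hadjv : (broom n 3).Adj v ⟨n - 3, by omega⟩ := (broom_hub_adj hn (by omega)).symm
    by_cases hu3 : (u : ℕ) ≤ n - 3
    · obtain ⟨p, hp⟩ := broom_spine_walk (n - 3 - (u : ℕ)) u ⟨n - 3, by omega⟩
        (by simp; omega) (by simp)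
      have hd := dist_le (Walk.cons hadjv p.reverse)
      rw [Walk.length_cons, Walk.length_reverse, hp] at hd
      omega
    · by_cases huv : u = v
      · subst huv
        simp [SimpleGraph.dist_self]
      · have hd := dist_le (Walk.cons hadjv
          (Walk.cons (broom_hub_adj hn (show n - 3 < (u : ℕ) by omega)) Walk.nil))
        simp only [Walk.length_cons, Walk.length_nil] at hd
        omega

lemma broom_ecc {n : ℕ} (hn : 4 ≤ n) (v : Fin n) :
    eccentricity (broom n 3) v = max (min (v : ℕ) (n - 2)) (n - 2 - (v : ℕ)) := by
  have hv := v.isLt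
  apply le_antisymm
  · exact Finset.sup_le fun u _ => broom_dist_le hn v u
  · have hf : ∀ u w : Fin n, (broom n 3).Adj u w →
        min (w : ℕ) (n - 2) ≤ min (u : ℕ) (n - 2) + 1 := by
      intro u w huw
      obtain ⟨hne, h⟩ := broom_adj.1 huw
      omega
    have h0 : 0 < n := by omega
    have hl : n - 1 < n := by omega
    have e1 : (broom n 3).dist v ⟨0, h0⟩ ≤ eccentricity (broom n 3) v :=
      Finset.le_sup (Finset.mem_univ _)
    have e2 : (broom n 3).dist v ⟨n - 1, hl⟩ ≤ eccentricity (broom n 3) v :=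
      Finset.le_sup (Finset.mem_univ _)
    have r1 : (broom n 3).Reachable (⟨0, h0⟩ : Fin n) v :=
      (broom_reach_hub hn _).symm.trans (broom_reach_hub hn v)
    have r2 : (broom n 3).Reachable v ⟨n - 1, hl⟩ :=
      (broom_reach_hub hn _).symm.trans (broom_reach_hub hn _)
    have l1 := f_dist_bound hf r1
    have l2 := f_dist_bound hf r2
    rw [SimpleGraph.dist_comm (G := broom n 3) (u := (⟨0, h0⟩ : Fin n)) (v := v)] at l1
    simp only [Fin.val_mk] at l1 l2
    omega

lemma broom_ecc_sum {n : ℕ} (hn : 4 ≤ n) :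
    ∑ v : Fin n, eccentricity (broom n 3) v = Tsum (n - 1) + (n - 2) := by
  obtain ⟨m, rfl⟩ : ∃ m, n = m + 1 := ⟨n - 1, by omega⟩
  have hm : 3 ≤ m := by omega
  rw [Finset.sum_congr rfl fun v _ => broom_ecc hn v,
    Fin.sum_univ_eq_sum_range (fun i => max (min i (m + 1 - 2)) (m + 1 - 2 - i)) (m + 1),
    Finset.sum_range_succ]
  have h1 : ∑ i ∈ Finset.range m, max (min i (m + 1 - 2)) (m + 1 - 2 - i)
      = ∑ i ∈ Finset.range m, max i (m - 1 - i) := by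
    apply Finset.sum_congr rfl
    intro i hi
    simp only [Finset.mem_range] at hi
    omega
  rw [h1]
  have h2 : max (min m (m + 1 - 2)) (m + 1 - 2 - m) = m - 1 := by omega
  rw [h2]
  simp only [Nat.add_sub_cancel, Tsum]
  omega

/-! ### Main theorem -/

/-- For `n ≥ 4`: `ecc (B(n,3)) ≤ ecc (Pₙ) - 1/2 - 1/(2n)` with equality iff `n` is odd,
and `ecc (B(n,3)) = ((n-1)·ecc (P_{n-1}) + (n-2)) / n`. -/
theorem avgEcc_broom_three {n : ℕ} (hn : 4 ≤ n) :
    (avgEcc (broom n 3) ≤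
        avgEcc (SimpleGraph.pathGraph n) - 1 / 2 - 1 / (2 * (n : ℝ))) ∧
    (avgEcc (broom n 3) =
        avgEcc (SimpleGraph.pathGraph n) - 1 / 2 - 1 / (2 * (n : ℝ)) ↔ Odd n) ∧
    (avgEcc (broom n 3) =
        (((n : ℝ) - 1) * avgEcc (SimpleGraph.pathGraph (n - 1)) + ((n : ℝ) - 2)) / n) := by
  have hn0 : (0 : ℝ) < n := by exact_mod_cast (by omega : 0 < n)
  have hn1 : ((n : ℝ)) - 1 ≠ 0 := by
    have : (4 : ℝ) ≤ n := by exact_mod_cast hn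
    linarith
  have hpa : avgEcc (pathGraph n) = ((Tsum n : ℕ) : ℝ) / n := by
    rw [avgEcc, Fintype.card_fin, ← Nat.cast_sum, path_ecc_sum]
  have hpb : avgEcc (pathGraph (n - 1)) = ((Tsum (n - 1) : ℕ) : ℝ) / ((n - 1 : ℕ) : ℝ) := by
    rw [avgEcc, Fintype.card_fin, ← Nat.cast_sum, path_ecc_sum]
  have hbr : avgEcc (broom n 3) = ((Tsum (n - 1) + (n - 2) : ℕ) : ℝ) / n := by
    rw [avgEcc, Fintype.card_fin, ← Nat.cast_sum, broom_ecc_sum hn]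
  set a : ℕ := Tsum (n - 1) + (n - 2) with ha
  set b : ℕ := Tsum n with hb
  have key : 2 * a + n + 1 ≤ 2 * b ∧ (2 * a + n + 1 = 2 * b ↔ n % 2 = 1) := by
    rcases Nat.even_or_odd n with he | ho
    · obtain ⟨m', hm'⟩ := he
      obtain ⟨k, hk⟩ : ∃ k, m' = k + 2 := ⟨m' - 2, by omega⟩
      have hb' := (Tsum_even_odd (k + 2)).1
      have ha' := (Tsum_even_odd (k + 1)).2
      have e1 : n = 2 * (k + 2) := by omega
      have e2 : n - 1 = 2 * (k + 1) + 1 := by omega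
      rw [e2] at ha
      rw [e1] at hb
      have r1 : (k + 2) * (k + 2) = k * k + 4 * k + 4 := by ring
      have r2 : (k + 1) * (k + 1) = k * k + 2 * k + 1 := by ring
      generalize hq : k * k = q at *
      generalize hq1 : (k + 2) * (k + 2) = q1 at *
      generalize hq2 : (k + 1) * (k + 1) = q2 at *
      omega
    · obtain ⟨m', hm'⟩ := ho
      have hm2 : 2 ≤ m' := by omega
      have hb' := (Tsum_even_odd m').2
      have ha' := (Tsum_even_odd m').1
      have e1 : n = 2 * m' + 1 := by omega
      have e2 : n - 1 = 2 * m' := by omega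
      rw [e2] at ha
      rw [e1] at hb
      generalize hq : m' * m' = q at *
      omega
  have hcast : (2 * (a : ℝ) + n + 1) ≤ 2 * (b : ℝ) ↔ True := by
    simp only [iff_true]
    exact_mod_cast key.1
  have expand : ((b : ℝ)) / n - 1 / 2 - 1 / (2 * n) - (a : ℝ) / n
      = (2 * (b : ℝ) - (n + 1) - 2 * a) / (2 * n) := by
    field_simp
    ring
  have hkey1 : (2 * (a : ℝ) + n + 1) ≤ 2 * (b : ℝ) := by exact_mod_cast key.1
  refine ⟨?_, ?_, ?_⟩
  · rw [hbr, hpa, ← sub_nonneg, expand]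
    apply div_nonneg
    · linarith
    · linarith
  · rw [hbr, hpa]
    constructor
    · intro h
      have hz : (2 * (b : ℝ) - (n + 1) - 2 * a) / (2 * n) = 0 := by
        rw [← expand]
        linarith
      have hnum : (2 * (b : ℝ) - (n + 1) - 2 * a) = 0 := by
        rcases div_eq_zero_iff.mp hz with h' | h'
        · exact h'
        · exfalso; linarith
      have : 2 * a + n + 1 = 2 * b := by
        have : (2 * (a : ℝ) + n + 1) = 2 * b := by linarith
        exact_mod_cast this
      rw [Nat.odd_iff]
      exact key.2.1 this
    · intro hodd
      have hnat : 2 * a + n + 1 = 2 * b := key.2.2 (Nat.odd_iff.mp hodd)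
      have hr : (2 * (a : ℝ) + n + 1) = 2 * b := by exact_mod_cast hnat
      have hz : (2 * (b : ℝ) - (n + 1) - 2 * a) / (2 * n) = 0 := by
        rw [show (2 * (b : ℝ) - (n + 1) - 2 * a) = 0 by linarith, zero_div]
      rw [← expand] at hz
      linarith
  · rw [hbr, hpb]
    have c1 : ((n - 1 : ℕ) : ℝ) = (n : ℝ) - 1 := by
      rw [Nat.cast_sub (by omega)]
      norm_num
    have c2 : ((a : ℕ) : ℝ) = ((Tsum (n - 1) : ℕ) : ℝ) + ((n : ℝ) - 2) := by
      rw [ha]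
      push_cast [Nat.cast_sub (show 2 ≤ n by omega)]
      ring
    rw [c1, c2, mul_div_cancel₀ _ hn1]
end

section
/- For integers n and k with 2 ≤ k ≤ n, the lollipop graph LP(n,k) satisfies ecc(LP(n,k))·ω(LP(n,k)) = (k/n)·⌊(−k² − 2k(n−1) + n(2+3n))/4⌋, and for every connected simple graph G on n ≥ 4 vertices, ecc(G)·ω(G) ≤ max_{2 ≤ k ≤ n} ecc(LP(n,k))·k; that is, the maximum value of ecc(G)·ω(G) over connected graphs on n vertices is achieved by some lollipop graph. -/
open SimpleGraph

/-- The lollipop graph `LP(n, k)`: a clique on the vertices `0, …, k-1`, a path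
`k — (k+1) — ⋯ — (n-1)`, and an edge joining the clique vertex `0` to the path
end `k`. -/
def lollipop (n k : ℕ) : SimpleGraph (Fin n) :=
  SimpleGraph.fromRel (fun i j =>
    ((i : ℕ) < k ∧ (j : ℕ) < k) ∨
    (k ≤ (i : ℕ) ∧ (j : ℕ) = (i : ℕ) + 1) ∨
    ((i : ℕ) = 0 ∧ (j : ℕ) = k))

section AuxiliaryLemmas
open Finset

section Toolkit

variable {V : Type*} {G : SimpleGraph V} {u v w : V}

/-- There is a walk from `u` to `p.getVert i` of length at most `i`. -/
lemma exists_walk_to_getVert (p : G.Walk u v) (i : ℕ) :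
    ∃ q : G.Walk u (p.getVert i), q.length ≤ i := by
  induction p generalizing i with
  | nil =>
    refine ⟨Walk.nil.copy rfl ?_, by simp⟩
    simp [Walk.getVert_of_length_le]
  | @cons a b c h q ih =>
    cases i with
    | zero => exact ⟨Walk.nil.copy rfl (by simp), by simp⟩
    | succ i =>
      obtain ⟨r, hr⟩ := ih i
      exact ⟨(r.cons h).copy rfl (Walk.getVert_cons_succ q h).symm,
        by simpa using Nat.succ_le_succ hr⟩

lemma exists_walk_from_getVert (p : G.Walk u v) (i : ℕ) :
    ∃ q : G.Walk (p.getVert i) v, q.length ≤ p.length - i := by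
  induction p generalizing i with
  | nil => exact ⟨Walk.nil.copy (by simp [Walk.getVert_of_length_le]) rfl, by simp⟩
  | @cons a b c h q ih =>
    cases i with
    | zero =>
      exact ⟨(q.cons h).copy (by simp) rfl, by simp⟩
    | succ i =>
      obtain ⟨r, hr⟩ := ih i
      refine ⟨r.copy (Walk.getVert_cons_succ q h).symm rfl, ?_⟩
      simpa using hr.trans (by simp [Nat.sub_le_sub_right])

lemma dist_getVert_left_le (p : G.Walk u v) (i : ℕ) : G.dist u (p.getVert i) ≤ i := by
  obtain ⟨q, hq⟩ := exists_walk_to_getVert p i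
  exact (SimpleGraph.dist_le q).trans hq

lemma dist_getVert_right_le (p : G.Walk u v) (i : ℕ) :
    G.dist (p.getVert i) v ≤ p.length - i := by
  obtain ⟨q, hq⟩ := exists_walk_from_getVert p i
  exact (SimpleGraph.dist_le q).trans hq

/-- On a geodesic, `getVert i` is at distance exactly `i` from the start and
`length - i` from the end. -/
lemma dist_getVert_eq (hconn : G.Connected) (p : G.Walk u v)
    (hp : p.length = G.dist u v) (i : ℕ) (hi : i ≤ p.length) :
    G.dist u (p.getVert i) = i ∧ G.dist (p.getVert i) v = p.length - i := by
  have h1 := dist_getVert_left_le p i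
  have h2 := dist_getVert_right_le p i
  have h3 := hconn.dist_triangle (u := u) (v := p.getVert i) (w := v)
  omega

/-- Lower bound for distance from a `1`-Lipschitz potential. -/
lemma pot_le_walk {φ : V → ℕ} (hφ : ∀ a b, G.Adj a b → φ a ≤ φ b + 1)
    (p : G.Walk u v) : φ u ≤ φ v + p.length := by
  induction p with
  | nil => simp
  | @cons a b c h q ih =>
    have := hφ a b h
    simp only [Walk.length_cons]
    omega

lemma pot_le_dist {φ : V → ℕ} (hφ : ∀ a b, G.Adj a b → φ a ≤ φ b + 1)
    (h : G.Reachable u v) : φ u ≤ φ v + G.dist u v := by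
  obtain ⟨p, hp⟩ := h.exists_walk_length_eq_dist
  simpa [hp] using pot_le_walk hφ p

/-- A finset of naturals any two of which differ by at most one has at most 2 elements. -/
lemma card_le_two_of_close (s : Finset ℕ) (h : ∀ a ∈ s, ∀ b ∈ s, a ≤ b + 1) :
    s.card ≤ 2 := by
  rcases s.eq_empty_or_nonempty with rfl | hs
  · simp
  · have hsub : s ⊆ Finset.Icc (s.min' hs) (s.min' hs + 1) := by
      intro a ha
      simp only [Finset.mem_Icc]
      exact ⟨s.min'_le a ha, h a ha _ (s.min'_mem hs)⟩
    calc s.card ≤ _ := Finset.card_le_card hsub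
    _ ≤ 2 := by rw [Nat.card_Icc]; omega

end Toolkit

namespace LolliTest

variable {n k : ℕ}

lemma adj_clique {u v : Fin n} (hu : (u:ℕ) < k) (hv : (v:ℕ) < k) (hne : u ≠ v) :
    (lollipop n k).Adj u v := by
  rw [lollipop, fromRel_adj]
  exact ⟨hne, Or.inl (Or.inl ⟨hu, hv⟩)⟩

lemma adj_path {u v : Fin n} (hu : k ≤ (u:ℕ)) (hv : (v:ℕ) = (u:ℕ) + 1) :
    (lollipop n k).Adj u v := by
  rw [lollipop, fromRel_adj]
  refine ⟨fun h => ?_, Or.inl (Or.inr (Or.inl ⟨hu, hv⟩))⟩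
  have := congrArg Fin.val h
  omega

lemma adj_bridge {u v : Fin n} (hk : 2 ≤ k) (hu : (u:ℕ) = 0) (hv : (v:ℕ) = k) :
    (lollipop n k).Adj u v := by
  rw [lollipop, fromRel_adj]
  refine ⟨fun h => ?_, Or.inl (Or.inr (Or.inr ⟨hu, hv⟩))⟩
  have := congrArg Fin.val h
  omega

lemma adj_elim {u v : Fin n} (h : (lollipop n k).Adj u v) :
    ((u:ℕ) < k ∧ (v:ℕ) < k ∧ (u:ℕ) ≠ (v:ℕ)) ∨
    (k ≤ (u:ℕ) ∧ (v:ℕ) = (u:ℕ) + 1) ∨ (k ≤ (v:ℕ) ∧ (u:ℕ) = (v:ℕ) + 1) ∨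
    ((u:ℕ) = 0 ∧ (v:ℕ) = k) ∨ ((v:ℕ) = 0 ∧ (u:ℕ) = k) := by
  rw [lollipop, fromRel_adj] at h
  obtain ⟨hne, h | h⟩ := h
  · have : (u:ℕ) ≠ (v:ℕ) := fun hh => hne (Fin.ext hh)
    tauto
  · have : (u:ℕ) ≠ (v:ℕ) := fun hh => hne (Fin.ext hh)
    tauto


/-- Potential function witnessing lower bounds on lollipop distances. -/
def pot (k : ℕ) (x : Fin n) : ℕ :=
  if k ≤ (x:ℕ) then (x:ℕ) - k + 2 else if (x:ℕ) = 0 then 1 else 0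

lemma pot_lip (hk : 2 ≤ k) :
    ∀ a b : Fin n, (lollipop n k).Adj a b → pot k a ≤ pot k b + 1 := by
  intro a b hab
  have h := adj_elim hab
  unfold pot
  split_ifs <;> omega

/-- Walk along the path part. -/
lemma walk_path_exists : ∀ (d : ℕ) (i : Fin n), k ≤ (i:ℕ) → ∀ (h : (i:ℕ) + d < n),
    ∃ w : (lollipop n k).Walk i ⟨(i:ℕ) + d, h⟩, w.length = d := by
  intro d
  induction d with
  | zero =>
    intro i hi h
    exact ⟨Walk.nil.copy rfl (Fin.ext (by simp)), by simp⟩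
  | succ d ih =>
    intro i hi h
    have h1 : (i:ℕ) + 1 < n := by omega
    set i' : Fin n := ⟨(i:ℕ) + 1, h1⟩ with hi'
    have hadj : (lollipop n k).Adj i i' := adj_path hi (by simp [hi'])
    have h2 : (i':ℕ) + d < n := by simp [hi']; omega
    obtain ⟨w, hw⟩ := ih i' (by simp [hi']; omega) h2
    refine ⟨(w.copy rfl (Fin.ext (by simp [hi']; omega))).cons hadj, by simp [hw]⟩

lemma dist_pp (hk : 2 ≤ k) {i j : Fin n} (hi : k ≤ (i:ℕ)) (hij : (i:ℕ) ≤ (j:ℕ)) :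
    (lollipop n k).dist i j = (j:ℕ) - (i:ℕ) := by
  have h : (i:ℕ) + ((j:ℕ) - (i:ℕ)) < n := by have := j.isLt; omega
  obtain ⟨w, hw⟩ := walk_path_exists ((j:ℕ) - (i:ℕ)) i hi h
  have hj : (⟨(i:ℕ) + ((j:ℕ) - (i:ℕ)), h⟩ : Fin n) = j := Fin.ext (by simp; omega)
  obtain ⟨w', hw'⟩ : ∃ w' : (lollipop n k).Walk i j, w'.length = (j:ℕ) - (i:ℕ) :=
    ⟨w.copy rfl hj, by simpa using hw⟩
  refine le_antisymm ((SimpleGraph.dist_le w').trans_eq hw') ?_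
  have hr : (lollipop n k).Reachable j i := (Walk.reachable w').symm
  have hpot := pot_le_dist (pot_lip hk) hr
  unfold pot at hpot
  rw [SimpleGraph.dist_comm]
  split_ifs at hpot <;> omega

lemma dist_zp (hk : 2 ≤ k) {z j : Fin n} (hz : (z:ℕ) = 0) (hj : k ≤ (j:ℕ)) :
    (lollipop n k).dist z j = (j:ℕ) - k + 1 := by
  have hkn : k < n := by have := j.isLt; omega
  have h : k + ((j:ℕ) - k) < n := by have := j.isLt; omega
  obtain ⟨w, hw⟩ := walk_path_exists ((j:ℕ) - k) ⟨k, hkn⟩ le_rfl h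
  have hj' : (⟨k + ((j:ℕ) - k), h⟩ : Fin n) = j := Fin.ext (by simp; omega)
  have hadj : (lollipop n k).Adj z ⟨k, hkn⟩ := adj_bridge hk hz rfl
  obtain ⟨wz, hwz⟩ : ∃ wz : (lollipop n k).Walk z j, wz.length = (j:ℕ) - k + 1 :=
    ⟨(w.copy rfl hj').cons hadj, by simpa using hw⟩
  refine le_antisymm ((SimpleGraph.dist_le wz).trans_eq hwz) ?_
  have hr : (lollipop n k).Reachable j z := (Walk.reachable wz).symm
  have hpot := pot_le_dist (pot_lip hk) hr
  unfold pot at hpot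
  rw [SimpleGraph.dist_comm]
  split_ifs at hpot <;> omega

lemma dist_cp (hk : 2 ≤ k) {i j : Fin n} (hi0 : (i:ℕ) ≠ 0) (hi : (i:ℕ) < k) (hj : k ≤ (j:ℕ)) :
    (lollipop n k).dist i j = (j:ℕ) - k + 2 := by
  have h0n : 0 < n := by have := j.isLt; omega
  have hkn : k < n := by have := j.isLt; omega
  have h : k + ((j:ℕ) - k) < n := by omega
  obtain ⟨w, hw⟩ := walk_path_exists ((j:ℕ) - k) ⟨k, hkn⟩ le_rfl h
  have hj' : (⟨k + ((j:ℕ) - k), h⟩ : Fin n) = j := Fin.ext (by simp; omega)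
  have hadj1 : (lollipop n k).Adj (⟨0, h0n⟩ : Fin n) ⟨k, hkn⟩ := adj_bridge hk rfl rfl
  have hadj0 : (lollipop n k).Adj i ⟨0, h0n⟩ := adj_clique hi (by simp; omega) (by
    intro hh; exact hi0 (by simpa using congrArg Fin.val hh))
  obtain ⟨wz, hwz⟩ : ∃ wz : (lollipop n k).Walk i j, wz.length = (j:ℕ) - k + 2 :=
    ⟨((w.copy rfl hj').cons hadj1).cons hadj0, by simp [hw]⟩
  refine le_antisymm ((SimpleGraph.dist_le wz).trans_eq hwz) ?_
  have hr : (lollipop n k).Reachable j i := (Walk.reachable wz).symm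
  have hpot := pot_le_dist (pot_lip hk) hr
  unfold pot at hpot
  rw [SimpleGraph.dist_comm]
  split_ifs at hpot <;> omega

lemma dist_cc {i j : Fin n} (hi : (i:ℕ) < k) (hj : (j:ℕ) < k) (hne : i ≠ j) :
    (lollipop n k).dist i j = 1 :=
  SimpleGraph.dist_eq_one_iff_adj.mpr (adj_clique hi hj hne)



lemma ecc_of_eq_n (hk : 2 ≤ k) (hkn : k = n) (v : Fin n) :
    eccentricity (lollipop n k) v = 1 := by
  unfold eccentricity
  refine le_antisymm (Finset.sup_le fun u _ => ?_) ?_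
  · by_cases h : u = v
    · subst h; simp [SimpleGraph.dist_self]
    · rw [dist_cc (by omega) (by omega) (Ne.symm h)]
  · have h2 : 2 ≤ n := hkn ▸ hk
    by_cases h : (v:ℕ) = 0
    · have hne : v ≠ (⟨1, by omega⟩ : Fin n) := by
        intro hh; rw [hh] at h; simp at h
      have := dist_cc (k := k) (i := v) (j := ⟨1, by omega⟩) (by omega) (by omega) hne
      exact le_trans (by rw [this]) (Finset.le_sup (Finset.mem_univ _))
    · have hne : v ≠ (⟨0, by omega⟩ : Fin n) := by
        intro hh; apply h; rw [hh]
      have := dist_cc (k := k) (i := v) (j := ⟨0, by omega⟩) (by omega) (by omega) hne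
      exact le_trans (by rw [this]) (Finset.le_sup (Finset.mem_univ _))

lemma ecc_zero (hk : 2 ≤ k) (hkn : k < n) {v : Fin n} (hv : (v:ℕ) = 0) :
    eccentricity (lollipop n k) v = n - k := by
  unfold eccentricity
  refine le_antisymm (Finset.sup_le fun u _ => ?_) ?_
  · rcases lt_or_ge (u:ℕ) k with hu | hu
    · by_cases h : v = u
      · subst h; simp [SimpleGraph.dist_self]
      · rw [dist_cc (by omega) hu h]; omega
    · rw [dist_zp hk hv hu]; have := u.isLt; omega
  · have hw : k ≤ ((⟨n-1, by omega⟩ : Fin n) : ℕ) := by simp; omega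
    have := dist_zp hk (z := v) hv hw
    refine le_trans ?_ (Finset.le_sup (Finset.mem_univ (⟨n-1, by omega⟩ : Fin n)))
    rw [this]; simp; omega

lemma ecc_clique (hk : 2 ≤ k) (hkn : k < n) {v : Fin n} (hv0 : (v:ℕ) ≠ 0) (hv : (v:ℕ) < k) :
    eccentricity (lollipop n k) v = n - k + 1 := by
  unfold eccentricity
  refine le_antisymm (Finset.sup_le fun u _ => ?_) ?_
  · rcases lt_or_ge (u:ℕ) k with hu | hu
    · by_cases h : v = u
      · subst h; simp [SimpleGraph.dist_self]
      · rw [dist_cc hv hu h]; omega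
    · rw [dist_cp hk hv0 hv hu]; have := u.isLt; omega
  · have hw : k ≤ ((⟨n-1, by omega⟩ : Fin n) : ℕ) := by simp; omega
    have := dist_cp hk (i := v) hv0 hv hw
    refine le_trans ?_ (Finset.le_sup (Finset.mem_univ (⟨n-1, by omega⟩ : Fin n)))
    rw [this]; simp; omega

lemma ecc_path (hk : 2 ≤ k) (hkn : k < n) {v : Fin n} (hv : k ≤ (v:ℕ)) :
    eccentricity (lollipop n k) v = max ((v:ℕ) - k + 2) (n - 1 - (v:ℕ)) := by
  unfold eccentricity
  refine le_antisymm (Finset.sup_le fun u _ => ?_) ?_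
  · rcases lt_or_ge (u:ℕ) k with hu | hu
    · by_cases h0 : (u:ℕ) = 0
      · rw [SimpleGraph.dist_comm, dist_zp hk h0 hv]; omega
      · rw [SimpleGraph.dist_comm, dist_cp hk h0 hu hv]; omega
    · rcases le_total (u:ℕ) (v:ℕ) with h | h
      · rw [SimpleGraph.dist_comm, dist_pp hk hu h]
        have := u.isLt; have := v.isLt; omega
      · rw [dist_pp hk hv h]
        have := u.isLt; omega
  · refine max_le ?_ ?_
    · have h1 : ((⟨1, by omega⟩ : Fin n) : ℕ) = 1 := rfl
      have := dist_cp hk (i := (⟨1, by omega⟩ : Fin n)) (j := v) (by omega) (by omega) hv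
      refine le_trans ?_ (Finset.le_sup (Finset.mem_univ (⟨1, by omega⟩ : Fin n)))
      rw [SimpleGraph.dist_comm, this]
    · have := dist_pp hk (i := v) (j := ⟨n-1, by omega⟩) hv (by simp; omega)
      refine le_trans ?_ (Finset.le_sup (Finset.mem_univ (⟨n-1, by omega⟩ : Fin n)))
      rw [this]


/-- The path-part eccentricity sum. -/
lemma T_rec (p : ℕ) (hp : 1 ≤ p) :
    ∑ j ∈ range (p+2), max (j+2) (p+2-1-j) =
      (∑ j ∈ range p, max (j+2) (p-1-j)) + (3*p+4) := by
  rw [Finset.sum_range_succ']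
  have h0 : max (0+2) (p+2-1-0) = p+1 := by omega
  rw [h0, Finset.sum_range_succ]
  have h1 : max ((p+1)+2) (p+2-1-(p+1)) = p+3 := by omega
  rw [h1]
  have h2 : ∑ j ∈ range p, max ((j+1)+2) (p+2-1-(j+1)) =
      ∑ j ∈ range p, (max (j+2) (p-1-j) + 1) := by
    refine Finset.sum_congr rfl fun j hj => ?_
    have hj' := Finset.mem_range.mp hj
    omega
  rw [h2, Finset.sum_add_distrib, Finset.sum_const, Finset.card_range]
  simp only [smul_eq_mul, mul_one]
  ring

lemma T_formula : ∀ p : ℕ, 1 ≤ p →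
    ∑ j ∈ range p, max (j+2) (p-1-j) = p*p + p + 1 - (p+1)*(p+1)/4 := by
  intro p
  induction p using Nat.strong_induction_on with
  | _ p ih =>
    intro hp
    match p, hp with
    | 1, _ => simp [Finset.sum_range_succ]
    | 2, _ => simp [Finset.sum_range_succ]
    | (q+3), _ =>
      have hq : 1 ≤ q + 1 := by omega
      have := T_rec (q+1) hq
      have hih := ih (q+1) (by omega) hq
      have harith : (q+1)*(q+1) + (q+1) + 1 - ((q+1)+1)*((q+1)+1)/4 + (3*(q+1)+4) =
          (q+3)*(q+3) + (q+3) + 1 - ((q+3)+1)*((q+3)+1)/4 := by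
        obtain ⟨s, hs⟩ : ∃ s, (q+2)*(q+2) = s := ⟨_, rfl⟩
        obtain ⟨t, ht⟩ : ∃ t, (q+4)*(q+4) = t ∧ t = s + 4*(q+3) := ⟨_, rfl, by rw [← hs]; ring⟩
        obtain ⟨u, hu⟩ : ∃ u, (q+1)*(q+1) = u ∧ s = u + 2*q + 3 ∧
            (q+3)*(q+3) = u + 4*q + 8 := ⟨_, rfl, by rw [← hs]; ring, by ring⟩
        obtain ⟨ht1, ht2⟩ := ht
        obtain ⟨hu1, hu2, hu3⟩ := hu
        rw [hs, ht1, hu1, hu3]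
        omega
      have hcast : q + 1 + 2 = q + 3 := by omega
      rw [hcast] at this
      rw [this, hih, harith]


lemma sum_ecc (hk : 2 ≤ k) (hkn : k ≤ n) :
    ∑ v : Fin n, eccentricity (lollipop n k) v =
      n * (n-k+1) - (n-k+1)*(n-k+1)/4 := by
  rcases eq_or_lt_of_le hkn with rfl | hlt
  · rw [Finset.sum_congr rfl (fun v _ => ecc_of_eq_n hk rfl v)]
    have h1 : k - k + 1 = 1 := by omega
    rw [h1]
    simp [Finset.card_univ]
  · obtain ⟨p, hp1, rfl⟩ : ∃ p, 1 ≤ p ∧ n = k + p := ⟨n-k, by omega, by omega⟩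
    have hnk : k + p - k = p := by omega
    rw [hnk]
    obtain ⟨k1, hk1, rfl⟩ : ∃ k1, 1 ≤ k1 ∧ k = k1 + 1 := ⟨k-1, by omega, by omega⟩
    set f : ℕ → ℕ := fun i => if i < k1+1 then (if i = 0 then p else p + 1)
         else max (i-(k1+1)+2) (k1+1+p-1-i) with hf
    have hE : ∀ v : Fin (k1+1+p), eccentricity (lollipop (k1+1+p) (k1+1)) v = f ↑v := by
      intro v
      show _ = if (v:ℕ) < k1+1 then (if (v:ℕ) = 0 then p else p + 1)
         else max ((v:ℕ)-(k1+1)+2) (k1+1+p-1-(v:ℕ))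
      by_cases h1 : (v:ℕ) < k1+1
      · by_cases h0 : (v:ℕ) = 0
        · rw [ecc_zero hk hlt h0, if_pos h1, if_pos h0]; omega
        · rw [ecc_clique hk hlt h0 h1, if_pos h1, if_neg h0]; omega
      · push_neg at h1
        rw [ecc_path hk hlt h1, if_neg (by omega)]
    rw [Finset.sum_congr rfl fun v _ => hE v, Fin.sum_univ_eq_sum_range f,
        ← Finset.sum_range_add_sum_Ico f (le_of_lt hlt), Finset.sum_range_succ' f k1]
    have hf0 : f 0 = p := by simp [hf]
    have hfc : ∑ i ∈ Finset.range k1, f (i+1) = k1 * (p+1) := by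
      have hcc : ∀ i ∈ Finset.range k1, f (i+1) = p+1 := by
        intro i hi
        have := Finset.mem_range.mp hi
        simp only [hf]
        rw [if_pos (by omega), if_neg (by omega)]
      rw [Finset.sum_congr rfl hcc, Finset.sum_const, Finset.card_range, smul_eq_mul]
    rw [hf0, hfc, Finset.sum_Ico_eq_sum_range]
    have hb : k1+1+p - (k1+1) = p := by omega
    rw [hb]
    have hfp : ∑ i ∈ Finset.range p, f (k1+1+i) = ∑ i ∈ Finset.range p, max (i+2) (p-1-i) := by
      refine Finset.sum_congr rfl fun i hi => ?_
      have := Finset.mem_range.mp hi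
      simp only [hf]
      rw [if_neg (by omega)]
      congr 1 <;> omega
    rw [hfp, T_formula p hp1]
    have hle : (p+1)*(p+1)/4 ≤ p*p + p + 1 := by
      obtain ⟨s, hs1, hs2⟩ : ∃ s, p*p = s ∧ (p+1)*(p+1) = s + 2*p + 1 := ⟨_, rfl, by ring⟩
      rw [hs1, hs2]
      omega
    rw [← Nat.add_sub_assoc hle]
    have hid : k1*(p+1) + p + (p*p + p + 1) = (k1+1+p)*(p+1) := by ring
    rw [hid]

lemma clique_mem_map {hkn : k ≤ n} {u : Fin n} :
    u ∈ Finset.univ.map (Fin.castLEEmb hkn) ↔ (u:ℕ) < k := by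
  simp only [Finset.mem_map, Finset.mem_univ, true_and, Fin.castLEEmb_apply]
  constructor
  · rintro ⟨a, rfl⟩
    simpa using a.isLt
  · intro h
    exact ⟨⟨(u:ℕ), h⟩, Fin.ext rfl⟩

lemma cliqueNum_lollipop (hk : 2 ≤ k) (hkn : k ≤ n) :
    (lollipop n k).cliqueNum = k := by
  have hle : k ≤ (lollipop n k).cliqueNum := by
    have hcl : (lollipop n k).IsClique ↑(Finset.univ.map (Fin.castLEEmb hkn)) := by
      intro u hu v hv huv
      have hu' : (u:ℕ) < k := clique_mem_map.mp (Finset.mem_coe.mp hu)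
      have hv' : (v:ℕ) < k := clique_mem_map.mp (Finset.mem_coe.mp hv)
      exact adj_clique hu' hv' huv
    have hcard : (Finset.univ.map (Fin.castLEEmb hkn)).card = k := by simp
    exact le_trans (le_of_eq hcard.symm) hcl.card_le_cliqueNum
  have hge : (lollipop n k).cliqueNum ≤ k := by
    obtain ⟨s, hs⟩ := SimpleGraph.exists_isNClique_cliqueNum (G := lollipop n k)
    rw [← hs.card_eq]
    by_cases hall : ∀ v ∈ s, (v:ℕ) < k
    · have hsub : s ⊆ Finset.univ.map (Fin.castLEEmb hkn) := fun v hv =>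
        clique_mem_map.mpr (hall v hv)
      calc s.card ≤ _ := Finset.card_le_card hsub
        _ = k := by simp
    · push_neg at hall
      obtain ⟨v, hv, hvk⟩ := hall
      have h1 : ∀ x ∈ s.erase v, ∀ y ∈ s.erase v, x = y := by
        intro x hx y hy
        by_contra hxy
        have hxv := Finset.ne_of_mem_erase hx
        have hyv := Finset.ne_of_mem_erase hy
        have haxv := hs.isClique (Finset.mem_coe.mpr (Finset.mem_of_mem_erase hx))
          (Finset.mem_coe.mpr hv) hxv
        have hayv := hs.isClique (Finset.mem_coe.mpr (Finset.mem_of_mem_erase hy))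
          (Finset.mem_coe.mpr hv) hyv
        have haxy := hs.isClique (Finset.mem_coe.mpr (Finset.mem_of_mem_erase hx))
          (Finset.mem_coe.mpr (Finset.mem_of_mem_erase hy)) hxy
        have e1 := adj_elim haxv
        have e2 := adj_elim hayv
        have e3 := adj_elim haxy
        omega
      have h2 : (s.erase v).card ≤ 1 := Finset.card_le_one.mpr h1
      have h3 := Finset.card_erase_of_mem hv
      omega
  omega

end LolliTest

open LolliTest

variable {V : Type*} [Fintype V] {G : SimpleGraph V}

lemma dist_le_ecc (v u : V) : G.dist v u ≤ eccentricity G v :=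
  Finset.le_sup (Finset.mem_univ u)

lemma ecc_add_card_clique_le [DecidableEq V] (hG : G.Connected) {K : Finset V}
    (hK : G.IsClique K) (v : V) :
    eccentricity G v + K.card ≤ Fintype.card V + 1 := by
  obtain ⟨y, -, hy⟩ := Finset.exists_mem_eq_sup Finset.univ ⟨v, Finset.mem_univ v⟩
    (fun u => G.dist v u)
  have hy' : eccentricity G v = G.dist v y := hy
  obtain ⟨p, hpath, hlen⟩ := (hG v y).exists_path_of_dist
  have hlen' : p.length = eccentricity G v := by rw [hlen, hy']
  -- the support of p as a finset
  have hPcard : p.support.toFinset.card = eccentricity G v + 1 := by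
    rw [List.toFinset_card_of_nodup hpath.support_nodup, SimpleGraph.Walk.length_support, hlen']
  -- distances of support vertices
  have hsup : ∀ x ∈ p.support.toFinset, G.dist v x = G.dist v x ∧
      (∀ x' ∈ p.support.toFinset, G.dist v x = G.dist v x' → x = x') := by
    intro x hx
    refine ⟨rfl, fun x' hx' hdd => ?_⟩
    rw [List.mem_toFinset, SimpleGraph.Walk.mem_support_iff_exists_getVert] at hx hx'
    obtain ⟨i, rfl, hi⟩ := hx
    obtain ⟨i', rfl, hi'⟩ := hx'
    have h1 := (dist_getVert_eq hG p (hlen.symm ▸ rfl) i hi).1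
    have h2 := (dist_getVert_eq hG p (hlen.symm ▸ rfl) i' hi').1
    rw [h1, h2] at hdd
    rw [hdd]
  -- K ∩ P has at most two elements
  have hcap : (K ∩ p.support.toFinset).card ≤ 2 := by
    have hinj : Set.InjOn (fun x => G.dist v x) ↑(K ∩ p.support.toFinset) := by
      intro x hx x' hx' hdd
      have hx1 := Finset.mem_coe.mp hx
      have hx1' := Finset.mem_coe.mp hx'
      exact (hsup x (Finset.mem_of_mem_inter_right hx1)).2 x'
        (Finset.mem_of_mem_inter_right hx1') hdd
    rw [← Finset.card_image_of_injOn hinj]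
    apply card_le_two_of_close
    intro a ha b hb
    simp only [Finset.mem_image] at ha hb
    obtain ⟨x, hx, rfl⟩ := ha
    obtain ⟨x', hx', rfl⟩ := hb
    by_cases hxx : x = x'
    · subst hxx; omega
    · have hadj : G.Adj x x' := hK (Finset.mem_coe.mpr (Finset.mem_of_mem_inter_left hx))
        (Finset.mem_coe.mpr (Finset.mem_of_mem_inter_left hx')) hxx
      have := hG.dist_triangle (u := v) (v := x') (w := x)
      rw [SimpleGraph.dist_eq_one_iff_adj.mpr hadj.symm] at this
      omega
  have hunion := Finset.card_union_add_card_inter K p.support.toFinset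
  have hle := Finset.card_le_univ (K ∪ p.support.toFinset)
  omega

lemma sum_ecc_le_of_clique : ∀ (N : ℕ) (W : Type) [Fintype W] [DecidableEq W]
    (G : SimpleGraph W), G.Connected → ∀ (K : Finset W), G.IsClique K →
    2 ≤ K.card → Fintype.card W ≤ N →
    ∑ v : W, eccentricity G v +
      (Fintype.card W - K.card + 1) * (Fintype.card W - K.card + 1) / 4
      ≤ Fintype.card W * (Fintype.card W - K.card + 1) := by
  intro N
  induction N with
  | zero =>
    intro W _ _ G hG K hK hK2 hcard
    have := Finset.card_le_univ K
    omega
  | succ N ih =>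
    intro W _ _ G hG K hK hK2 hcard
    have hwn : K.card ≤ Fintype.card W := Finset.card_le_univ K
    have hKne : K.Nonempty := Finset.card_pos.mp (by omega)
    obtain ⟨c₀, hc₀⟩ := id hKne
    -- distance to the clique
    set f : W → ℕ := fun v => K.inf' hKne (fun c => G.dist v c) with hf
    have hfmem : ∀ v, v ∈ K → f v = 0 := by
      intro v hv
      have h1 : f v ≤ G.dist v v := Finset.inf'_le _ hv
      rw [SimpleGraph.dist_self] at h1
      omega
    have hfK : ∀ v, f v = 0 → v ∈ K := by
      intro v hv
      obtain ⟨c, hc, hcd⟩ := Finset.exists_mem_eq_inf' hKne (fun c => G.dist v c)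
      have hfc : f v = G.dist v c := hcd
      have : v = c := (hG.dist_eq_zero_iff).mp (by omega)
      rwa [this]
    obtain ⟨v₀, -, hv₀⟩ := Finset.exists_max_image Finset.univ f ⟨c₀, Finset.mem_univ c₀⟩
    have hv₀' : ∀ v, f v ≤ f v₀ := fun v => hv₀ v (Finset.mem_univ v)
    by_cases hbase : f v₀ = 0
    · -- base case: all vertices are in the clique
      have hall : ∀ v : W, v ∈ K := by
        intro v
        apply hfK
        have := hv₀' v
        omega
      have hnw : Fintype.card W = K.card := by
        rw [← Finset.card_univ]
        congr 1
        exact (Finset.eq_univ_iff_forall.mpr hall).symm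
      have hecc : ∀ v : W, eccentricity G v = 1 := by
        intro v
        apply le_antisymm
        · apply Finset.sup_le
          intro u _
          by_cases h : v = u
          · subst h; simp [SimpleGraph.dist_self]
          · rw [SimpleGraph.dist_eq_one_iff_adj.mpr
              (hK (Finset.mem_coe.mpr (hall v)) (Finset.mem_coe.mpr (hall u)) h)]
        · obtain ⟨u, hu⟩ := Fintype.exists_ne_of_one_lt_card (by omega) v
          have : G.dist v u = 1 := SimpleGraph.dist_eq_one_iff_adj.mpr
            (hK (Finset.mem_coe.mpr (hall v)) (Finset.mem_coe.mpr (hall u)) (Ne.symm hu))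
          calc 1 = G.dist v u := this.symm
            _ ≤ _ := dist_le_ecc v u
      rw [Finset.sum_congr rfl fun v _ => hecc v, Finset.sum_const, Finset.card_univ,
        smul_eq_mul, mul_one]
      have h1 : Fintype.card W - K.card + 1 = 1 := by omega
      rw [h1]
      omega
    · -- inductive step: delete v₀, a vertex farthest from K
      have hv₀K : v₀ ∉ K := fun h => hbase (hfmem v₀ h)
      set S : Set W := {v | v ≠ v₀} with hS
      haveI : DecidablePred (· ∈ S) := Classical.decPred _
      set G' := G.induce S with hG'
      have hfilter : Finset.filter (· ∈ S) Finset.univ = Finset.univ.erase v₀ := by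
        ext x
        simp [hS, Finset.mem_erase]
      have hcardS : Fintype.card ↥S = Fintype.card W - 1 := by
        rw [Fintype.card_subtype, hfilter, Finset.card_erase_of_mem (Finset.mem_univ v₀),
          Finset.card_univ]
      -- the clique lives in S
      have hKS : ∀ x ∈ K, x ∈ S := fun x hx h => hv₀K (h ▸ hx)
      have hc₀S : c₀ ∈ S := hKS c₀ hc₀
      set K' : Finset ↥S := K.subtype (· ∈ S) with hK'
      have hK'card : K'.card = K.card := by
        rw [hK']
        rw [← Finset.card_map (Function.Embedding.subtype (· ∈ S)), Finset.subtype_map]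
        rw [Finset.filter_true_of_mem hKS]
      have hK'clique : G'.IsClique ↑K' := by
        intro a ha b hb hab
        have ha' : ↑a ∈ K := by
          have := Finset.mem_coe.mp ha; rwa [hK', Finset.mem_subtype] at this
        have hb' : ↑b ∈ K := by
          have := Finset.mem_coe.mp hb; rwa [hK', Finset.mem_subtype] at this
        exact hK (Finset.mem_coe.mpr ha') (Finset.mem_coe.mpr hb')
          (fun h => hab (Subtype.ext h))
      -- G' is connected
      have hreach : ∀ (t : ℕ) (y : W) (hy : y ∈ S), f y ≤ t →
          G'.Reachable ⟨y, hy⟩ ⟨c₀, hc₀S⟩ := by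
        intro t
        induction t with
        | zero =>
          intro y hy hfy
          have hyK : y ∈ K := hfK y (by omega)
          by_cases h : y = c₀
          · subst h; rfl
          · have hadjc : G'.Adj ⟨y, hy⟩ ⟨c₀, hc₀S⟩ :=
              hK (Finset.mem_coe.mpr hyK) (Finset.mem_coe.mpr hc₀) h
            exact hadjc.reachable
        | succ t iht =>
          intro y hy hfy
          by_cases hyK : y ∈ K
          · by_cases h : y = c₀
            · subst h; rfl
            · have hadjc : G'.Adj ⟨y, hy⟩ ⟨c₀, hc₀S⟩ :=
                hK (Finset.mem_coe.mpr hyK) (Finset.mem_coe.mpr hc₀) h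
              exact hadjc.reachable
          · have hfy1 : 1 ≤ f y := by
              rcases Nat.eq_zero_or_pos (f y) with h | h
              · exact absurd (hfK y h) hyK
              · omega
            obtain ⟨c, hc, hcd⟩ := Finset.exists_mem_eq_inf' hKne (fun c => G.dist y c)
            have hcd' : G.dist y c = f y := hcd.symm
            obtain ⟨q, hq⟩ := (hG y c).exists_walk_length_eq_dist
            have hqpos : 0 < q.length := by rw [hq, hcd']; omega
            have hnotnil : ¬ q.Nil := by
              rw [SimpleGraph.Walk.nil_iff_length_eq]
              omega
            have hadj : G.Adj y (q.getVert 1) := q.adj_snd hnotnil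
            have hdz : G.dist (q.getVert 1) c ≤ f y - 1 := by
              have := dist_getVert_right_le q 1
              rw [hq, hcd'] at this
              omega
            have hfz : f (q.getVert 1) ≤ t := by
              have h1 : f (q.getVert 1) ≤ G.dist (q.getVert 1) c := Finset.inf'_le _ hc
              omega
            have hzS : q.getVert 1 ∈ S := by
              intro hzv
              have h1 := hv₀' y
              have h2 : f (q.getVert 1) ≤ f y - 1 :=
                le_trans (Finset.inf'_le _ hc) hdz
              rw [hzv] at h2
              omega
            have hadj' : G'.Adj ⟨y, hy⟩ ⟨q.getVert 1, hzS⟩ := hadj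
            exact hadj'.reachable.trans (iht (q.getVert 1) hzS hfz)
      have hG'conn : G'.Connected := by
        rw [SimpleGraph.connected_iff]
        refine ⟨fun a b => ?_, ⟨⟨c₀, hc₀S⟩⟩⟩
        exact (hreach (f ↑a) ↑a a.2 le_rfl).trans (hreach (f ↑b) ↑b b.2 le_rfl).symm
      -- distances in G are at most distances in G'
      have hdistle : ∀ a b : ↥S, G.dist ↑a ↑b ≤ G'.dist a b := by
        intro a b
        obtain ⟨q, hq⟩ := (hG'conn.preconnected a b).exists_walk_length_eq_dist
        rw [← hq]
        calc G.dist ↑a ↑b ≤ (q.map (SimpleGraph.Embedding.induce S).toHom).length :=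
              SimpleGraph.dist_le _
          _ = q.length := SimpleGraph.Walk.length_map _ _
      -- a neighbour of v₀
      have hv₀c₀ : v₀ ≠ c₀ := fun h => hv₀K (h ▸ hc₀)
      obtain ⟨q₀, hq₀⟩ := (hG v₀ c₀).exists_walk_length_eq_dist
      have hq₀pos : 0 < q₀.length := by
        rw [hq₀]
        exact hG.pos_dist_of_ne hv₀c₀
      have hadj₀ : G.Adj v₀ (q₀.getVert 1) := q₀.adj_snd
        (by rw [SimpleGraph.Walk.nil_iff_length_eq]; omega)
      have hu₁S : q₀.getVert 1 ∈ S := hadj₀.ne'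
      -- eccentricity comparisons
      have h1 : ∀ (a : ↥S) (u : W) (hu : u ∈ S), G.dist ↑a u ≤ eccentricity G' a := by
        intro a u hu
        calc G.dist ↑a u ≤ G'.dist a ⟨u, hu⟩ := hdistle a ⟨u, hu⟩
          _ ≤ _ := dist_le_ecc a ⟨u, hu⟩
      have h2 : ∀ a : ↥S, G.dist ↑a v₀ ≤ eccentricity G' a + 1 := by
        intro a
        have hd1 : G.dist (q₀.getVert 1) v₀ = 1 :=
          SimpleGraph.dist_eq_one_iff_adj.mpr hadj₀.symm
        calc G.dist ↑a v₀ ≤ G.dist ↑a (q₀.getVert 1) + G.dist (q₀.getVert 1) v₀ :=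
              hG.dist_triangle
          _ ≤ eccentricity G' a + 1 := by
              have := h1 a (q₀.getVert 1) hu₁S
              omega
      have heccle1 : ∀ a : ↥S, eccentricity G ↑a ≤ eccentricity G' a + 1 := by
        intro a
        apply Finset.sup_le
        intro u _
        by_cases hu : u ∈ S
        · have := h1 a u hu; omega
        · have huv : u = v₀ := by
            by_contra h
            exact hu h
          rw [huv]
          exact h2 a
      have heccle2 : ∀ a : ↥S, eccentricity G ↑a ≤
          max (eccentricity G' a) (G.dist ↑a v₀) := by
        intro a
        apply Finset.sup_le
        intro u _
        by_cases hu : u ∈ S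
        · exact le_max_of_le_left (h1 a u hu)
        · have huv : u = v₀ := by
            by_contra h
            exact hu h
          rw [huv]
          exact le_max_right _ _
      -- the vertex y₀ attaining the eccentricity of v₀, and a geodesic to it
      obtain ⟨y₀, -, hy₀⟩ := Finset.exists_mem_eq_sup Finset.univ
        ⟨v₀, Finset.mem_univ v₀⟩ (fun u => G.dist v₀ u)
      have hy₀' : eccentricity G v₀ = G.dist v₀ y₀ := hy₀
      obtain ⟨pw, hpw⟩ := (hG v₀ y₀).exists_walk_length_eq_dist
      have hpwlen : pw.length = eccentricity G v₀ := by rw [hpw, hy₀']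
      set e₀ := eccentricity G v₀ with he₀
      -- the low-eccentricity vertices on the geodesic
      have hgetS : ∀ j ∈ Finset.Icc 1 (e₀/2), pw.getVert j ∈ S := by
        intro j hj
        rw [Finset.mem_Icc] at hj
        have hje : j ≤ pw.length := by omega
        have hd := (dist_getVert_eq hG pw (hpw.symm ▸ rfl) j hje).1
        intro hcon
        rw [hcon, SimpleGraph.dist_self] at hd
        omega
      set gg : ℕ → ↥S := fun j => if h : pw.getVert j ∈ S then ⟨pw.getVert j, h⟩
        else ⟨c₀, hc₀S⟩ with hgg
      set B : Finset ↥S := (Finset.Icc 1 (e₀/2)).image gg with hB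
      have hBdist : ∀ j ∈ Finset.Icc 1 (e₀/2), G.dist v₀ (pw.getVert j) = j ∧
          G.dist (pw.getVert j) y₀ = e₀ - j := by
        intro j hj
        rw [Finset.mem_Icc] at hj
        have hje : j ≤ pw.length := by omega
        have hd := dist_getVert_eq hG pw (hpw.symm ▸ rfl) j hje
        rw [hpwlen] at hd
        exact hd
      have hBcard : B.card = e₀/2 := by
        have hinj : Set.InjOn gg ↑(Finset.Icc 1 (e₀/2)) := by
          intro j hj j' hj' hjj
          have hj1 := hgetS j (Finset.mem_coe.mp hj)
          have hj2 := hgetS j' (Finset.mem_coe.mp hj')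
          rw [hgg] at hjj
          simp only [dif_pos hj1, dif_pos hj2] at hjj
          have hveq : pw.getVert j = pw.getVert j' := congrArg Subtype.val hjj
          have hd1 := (hBdist j (Finset.mem_coe.mp hj)).1
          have hd2 := (hBdist j' (Finset.mem_coe.mp hj')).1
          rw [hveq] at hd1
          omega
        rw [hB, Finset.card_image_of_injOn hinj, Nat.card_Icc]
        omega
      have hBprop : ∀ a ∈ B, eccentricity G ↑a ≤ eccentricity G' a := by
        intro a ha
        rw [hB, Finset.mem_image] at ha
        obtain ⟨j, hj, rfl⟩ := ha
        have hjS := hgetS j hj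
        rw [hgg]
        simp only [dif_pos hjS]
        rw [Finset.mem_Icc] at hj
        have hd := hBdist j (Finset.mem_Icc.mpr hj)
        -- y₀ is in S
        have hy₀S : y₀ ∈ S := by
          intro hcon
          have : G.dist v₀ y₀ = 0 := by rw [hcon, SimpleGraph.dist_self]
          omega
        show eccentricity G (pw.getVert j) ≤ eccentricity G' ⟨pw.getVert j, hjS⟩
        by_contra hcontra
        push_neg at hcontra
        have hle2 : eccentricity G (pw.getVert j) ≤
            max (eccentricity G' ⟨pw.getVert j, hjS⟩) (G.dist (pw.getVert j) v₀) :=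
          heccle2 ⟨pw.getVert j, hjS⟩
        have hdcomm : G.dist (pw.getVert j) v₀ = j := by
          rw [SimpleGraph.dist_comm]; exact hd.1
        have hlow : e₀ - j ≤ eccentricity G' ⟨pw.getVert j, hjS⟩ := by
          have h1' : G.dist (pw.getVert j) y₀ ≤ eccentricity G' ⟨pw.getVert j, hjS⟩ :=
            h1 ⟨pw.getVert j, hjS⟩ y₀ hy₀S
          omega
        rw [hdcomm] at hle2
        rcases max_cases (eccentricity G' ⟨pw.getVert j, hjS⟩) j with ⟨hm, _⟩ | ⟨hm, _⟩ <;> omega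
      -- summation bound over S
      have hsumS : ∑ a : ↥S, eccentricity G ↑a ≤
          (∑ a : ↥S, eccentricity G' a) + ((Fintype.card W - 1) - e₀/2) := by
        have hsplit1 : ∑ a ∈ Finset.univ \ B, eccentricity G ↑a +
            ∑ a ∈ B, eccentricity G ↑a = ∑ a : ↥S, eccentricity G ↑a :=
          Finset.sum_sdiff (Finset.subset_univ B)
        have hsplit2 : ∑ a ∈ Finset.univ \ B, eccentricity G' a +
            ∑ a ∈ B, eccentricity G' a = ∑ a : ↥S, eccentricity G' a :=
          Finset.sum_sdiff (Finset.subset_univ B)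
        have hb1 : ∑ a ∈ B, eccentricity G ↑a ≤ ∑ a ∈ B, eccentricity G' a :=
          Finset.sum_le_sum hBprop
        have hb2 : ∑ a ∈ Finset.univ \ B, eccentricity G ↑a ≤
            ∑ a ∈ Finset.univ \ B, (eccentricity G' a + 1) :=
          Finset.sum_le_sum (fun a _ => heccle1 a)
        rw [Finset.sum_add_distrib, Finset.sum_const, smul_eq_mul, mul_one] at hb2
        have hcard_sdiff : (Finset.univ \ B).card = (Fintype.card W - 1) - e₀/2 := by
          rw [Finset.card_sdiff_of_subset (Finset.subset_univ B), Finset.card_univ, hBcard, hcardS]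
        omega
      -- apply the induction hypothesis
      have hK'2 : 2 ≤ K'.card := by rw [hK'card]; exact hK2
      have hcardS_le : Fintype.card ↥S ≤ N := by omega
      have hih := ih ↥S G' hG'conn K' hK'clique hK'2 hcardS_le
      rw [hK'card, hcardS] at hih
      -- eccentricity of v₀ is at most n - w + 1
      have he₀le : e₀ + K.card ≤ Fintype.card W + 1 := ecc_add_card_clique_le hG hK v₀
      -- split the global sum
      have hsplit : ∑ v : W, eccentricity G v =
          eccentricity G v₀ + ∑ a : ↥S, eccentricity G ↑a := by
        rw [← Finset.add_sum_erase _ _ (Finset.mem_univ v₀)]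
        congr 1
        exact Finset.sum_subtype (Finset.univ.erase v₀)
          (by intro x; simp [hS, Finset.mem_erase]) (fun v => eccentricity G v)
      -- final arithmetic
      rw [hsplit]
      rw [← he₀]
      set n := Fintype.card W with hn
      set w := K.card with hw
      have hwn1 : w ≤ n - 1 := by
        have : K ⊆ Finset.univ.erase v₀ := fun x hx =>
          Finset.mem_erase.mpr ⟨fun h => hv₀K (h ▸ hx), Finset.mem_univ x⟩
        have := Finset.card_le_card this
        rw [Finset.card_erase_of_mem (Finset.mem_univ v₀), Finset.card_univ] at this
        omega
      obtain ⟨mm, hmm1, hmm2⟩ : ∃ mm, 1 ≤ mm ∧ n = w + mm := ⟨n - w, by omega, by omega⟩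
      have hm1 : n - w + 1 = mm + 1 := by omega
      have hm2 : n - 1 - w + 1 = mm := by omega
      rw [hm1]
      rw [hm2] at hih
      -- products
      obtain ⟨P1, hP1, P2, hP2, hP12⟩ : ∃ P1, n * (mm+1) = P1 ∧ ∃ P2, (n-1) * mm = P2 ∧
          P1 = P2 + w + 2*mm := by
        refine ⟨_, rfl, _, rfl, ?_⟩
        have hn1 : n - 1 = w + mm - 1 := by omega
        rw [hn1, hmm2]
        obtain ⟨w2, hw2⟩ : ∃ w2, w = w2 + 2 := ⟨w - 2, by omega⟩
        rw [hw2]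
        have h3 : w2 + 2 + mm - 1 = w2 + 1 + mm := by omega
        rw [h3]
        ring
      rw [hP1]
      rw [hP2] at hih
      rcases Nat.even_or_odd mm with ⟨s, hs⟩ | ⟨s, hs⟩
      · obtain ⟨t, ht1, ht2⟩ : ∃ t, mm * mm = 4*t ∧ (mm+1)*(mm+1) = 4*t + 4*s + 1 := by
          refine ⟨s*s, by rw [hs]; ring, by rw [hs]; ring⟩
        rw [ht2]
        rw [ht1] at hih
        omega
      · obtain ⟨t, ht1, ht2⟩ : ∃ t, mm * mm = 4*t + 1 ∧ (mm+1)*(mm+1) = 4*t + 4*s + 4 := by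
          refine ⟨s*s + s, by rw [hs]; ring, by rw [hs]; ring⟩
        rw [ht2]
        rw [ht1] at hih
        omega


/-- The floor expression in the theorem statement equals `n·m - ⌊m²/4⌋` with `m = n-k+1`. -/
lemma floor_expr_eq {n k : ℕ} (hk2 : 2 ≤ k) (hkn : k ≤ n) :
    (n * (2 + 3 * n) - k * k - 2 * k * (n - 1)) / 4 =
      n * (n - k + 1) - (n - k + 1) * (n - k + 1) / 4 := by
  obtain ⟨p, rfl⟩ : ∃ p, n = k + p := ⟨n - k, by omega⟩
  obtain ⟨k2, rfl⟩ : ∃ k2, k = k2 + 2 := ⟨k - 2, by omega⟩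
  have hm : k2 + 2 + p - (k2 + 2) + 1 = p + 1 := by omega
  rw [hm]
  obtain ⟨A, B, C, q, P, hA, hB, hC, hq, hP, hkey, hle, hmod⟩ :
      ∃ A B C q P, (k2+2+p) * (2 + 3 * (k2+2+p)) = A ∧ (k2+2) * (k2+2) = B ∧
        2 * (k2+2) * ((k2+2+p) - 1) = C ∧ (p+1)*(p+1) = q ∧ (k2+2+p)*(p+1) = P ∧
        A + q = B + C + 4*P + 1 ∧ q ≤ 4*P ∧ (q % 4 = 0 ∨ q % 4 = 1) := by
    refine ⟨_, _, _, _, _, rfl, rfl, rfl, rfl, rfl, ?_, ?_, ?_⟩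
    · have h1 : (k2+2+p) - 1 = k2 + 1 + p := by omega
      rw [h1]
      ring
    · calc (p+1)*(p+1) ≤ (k2+2+p)*(p+1) :=
          Nat.mul_le_mul_right _ (by omega)
        _ ≤ 4*((k2+2+p)*(p+1)) := by omega
    · rcases Nat.even_or_odd p with ⟨t, ht⟩ | ⟨t, ht⟩
      · right
        obtain ⟨u, hu⟩ : ∃ u, (p+1)*(p+1) = 4*u + 1 := ⟨t*t + t, by rw [ht]; ring⟩
        omega
      · left
        obtain ⟨u, hu⟩ : ∃ u, (p+1)*(p+1) = 4*u := ⟨(t+1)*(t+1), by rw [ht]; ring⟩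
        omega
  rw [hA, hB, hC, hq, hP]
  omega

end AuxiliaryLemmas

/-- For `2 ≤ k ≤ n`, `ecc (LP(n,k)) · ω(LP(n,k)) = (k/n)·⌊(-k² - 2k(n-1) + n(2+3n))/4⌋`,
and for every connected graph `G` on `n ≥ 4` vertices the value `ecc(G) · ω(G)` is at
most the value attained by some lollipop graph. -/
theorem avgEcc_mul_cliqueNum_lollipop {n : ℕ} (hn : 4 ≤ n) :
    (∀ k, 2 ≤ k → k ≤ n →
      avgEcc (lollipop n k) * ((lollipop n k).cliqueNum : ℝ) =
        (k : ℝ) / n * (((n * (2 + 3 * n) - k * k - 2 * k * (n - 1)) / 4 : ℕ) : ℝ)) ∧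
    (∀ (V : Type) [Fintype V] (G : SimpleGraph V), G.Connected → Fintype.card V = n →
      ∃ k, 2 ≤ k ∧ k ≤ n ∧
        avgEcc G * (G.cliqueNum : ℝ) ≤ avgEcc (lollipop n k) * (k : ℝ)) := by
  have hn0 : (0:ℝ) < (n:ℝ) := by exact_mod_cast Nat.cast_pos.mpr (by omega)
  constructor
  · intro k hk2 hkn
    have hsum := LolliTest.sum_ecc (n := n) (k := k) hk2 hkn
    have hcn := LolliTest.cliqueNum_lollipop (n := n) (k := k) hk2 hkn
    have hfl := floor_expr_eq (n := n) (k := k) hk2 hkn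
    rw [avgEcc, hcn, Fintype.card_fin, hfl, ← hsum]
    rw [← Nat.cast_sum]
    ring
  · intro V _ G hGconn hcardV
    classical
    have hV2 : 1 < Fintype.card V := by omega
    obtain ⟨x, y, hxy⟩ := Fintype.exists_pair_of_one_lt_card hV2
    obtain ⟨p0, hp0⟩ := (hGconn x y).exists_walk_length_eq_dist
    have hp0pos : 0 < p0.length := by
      rw [hp0]
      exact hGconn.pos_dist_of_ne hxy
    have hadjxy : G.Adj x (p0.getVert 1) := p0.adj_snd
      (by rw [SimpleGraph.Walk.nil_iff_length_eq]; omega)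
    have hw2 : 2 ≤ G.cliqueNum := by
      have hcl : G.IsClique ({x, p0.getVert 1} : Finset V) := by
        intro a ha b hb hab
        simp only [Finset.coe_insert, Set.mem_insert_iff, Finset.coe_singleton,
          Set.mem_singleton_iff] at ha hb
        rcases ha with rfl | rfl <;> rcases hb with rfl | rfl
        · exact absurd rfl hab
        · exact hadjxy
        · exact hadjxy.symm
        · exact absurd rfl hab
      have hcard2 : ({x, p0.getVert 1} : Finset V).card = 2 :=
        Finset.card_pair hadjxy.ne
      calc (2:ℕ) = _ := hcard2.symm
        _ ≤ _ := hcl.card_le_cliqueNum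
    obtain ⟨K, hK⟩ := SimpleGraph.exists_isNClique_cliqueNum (G := G)
    have hwn : G.cliqueNum ≤ n := by
      rw [← hK.card_eq, ← hcardV]
      exact Finset.card_le_univ K
    refine ⟨G.cliqueNum, hw2, hwn, ?_⟩
    have hlemB := sum_ecc_le_of_clique (Fintype.card V) V G hGconn K hK.isClique
      (by rw [hK.card_eq]; exact hw2) le_rfl
    rw [hK.card_eq, hcardV] at hlemB
    have hsum := LolliTest.sum_ecc (n := n) (k := G.cliqueNum) hw2 hwn
    have hnat : (∑ v : V, eccentricity G v) ≤
        ∑ v : Fin n, eccentricity (lollipop n G.cliqueNum) v := by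
      rw [hsum]
      omega
    rw [avgEcc, avgEcc, hcardV, Fintype.card_fin, ← Nat.cast_sum, ← Nat.cast_sum]
    have hcast : ((∑ v : V, eccentricity G v : ℕ) : ℝ) ≤
        ((∑ v : Fin n, eccentricity (lollipop n G.cliqueNum) v : ℕ) : ℝ) :=
      Nat.cast_le.mpr hnat
    gcongr
end
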